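/- arXiv:2101.10543 — 10 statements merged into one kernel-verified Lean document; each statement's English description precedes it below -/
import Mathlib

section
/- Let n be a positive integer with n ≡ 1 (mod 4) and let d' = (3^(n+1) - 1)/8 + (3^n - 1)/2. Then the power function F'(x) = x^{d'} on GF(3^n) has (-1)-differential uniformity at most 4; that is, for all a, b ∈ GF(3^n), the number of x ∈ GF(3^n) satisfying (x+a)^{d'} + x^{d'} = b is at most 4. -/
instance : Fact (Nat.Prime 3) := ⟨by norm_num⟩

private lemma aux81 (m : ℕ) : ∃ j : ℕ, 81 ^ m = 16 * j + 1 := by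
  induction m with
  | zero => exact ⟨0, rfl⟩
  | succ m ih =>
    obtain ⟨j, hj⟩ := ih
    exact ⟨81 * j + 5, by rw [pow_succ, hj]; ring⟩

private theorem main_bound {F : Type*} [Field F] [Fintype F] (h d : ℕ)
    (h3 : (3 : F) = 0) (hcard : Fintype.card F = 2 * h + 1) (hodd : Odd h)
    (hd4 : 4 * d = 7 * h + 1) (hde : Even d) (a b : F) :
    {x : F | (x + a) ^ d + x ^ d = b}.ncard ≤ 4 := by
  have hd0 : d ≠ 0 := by omega
  -- basic square-character facts
  have L1 : ∀ x : F, x ≠ 0 → x ^ (2 * h) = 1 := by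
    intro x hx
    have e : Fintype.card F - 1 = 2 * h := by omega
    have := FiniteField.pow_card_sub_one_eq_one x hx
    rwa [e] at this
  have h1neg : (-1 : F) ≠ 1 := by
    intro hcon
    exact one_ne_zero (α := F) (by linear_combination h3 + hcon)
  have Lpm : ∀ x : F, x ≠ 0 → x ^ h = 1 ∨ x ^ h = -1 := by
    intro x hx
    apply mul_self_eq_one_iff.mp
    rw [← pow_add, show h + h = 2 * h by ring]
    exact L1 x hx
  have hs2of : ∀ x : F, x ≠ 0 → x ^ h * x ^ h = 1 := by
    intro x hx
    rw [← pow_add, show h + h = 2 * h by ring]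
    exact L1 x hx
  have Lsq : ∀ p q : F, p ^ 2 = -(q ^ 2) → p = 0 ∧ q = 0 := by
    intro p q hpq
    by_cases hq : q = 0
    · refine ⟨?_, hq⟩
      have : p ^ 2 = 0 := by rw [hpq, hq]; ring
      exact pow_eq_zero_iff (two_ne_zero) |>.mp this
    · exfalso
      have hp : p ≠ 0 := by
        intro h0
        apply hq
        have : q ^ 2 = 0 := by rw [h0] at hpq; linear_combination hpq
        exact pow_eq_zero_iff (two_ne_zero) |>.mp this
      have e1 : p ^ (2 * h) = 1 := L1 p hp
      rw [pow_mul, hpq, Odd.neg_pow hodd, ← pow_mul, L1 q hq] at e1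
      exact h1neg e1
  have Lphi : ∀ B p q : F, B ≠ 0 → B * p ^ 3 + B ^ 3 * p = B * q ^ 3 + B ^ 3 * q → p = q := by
    intro B p q hB heq
    have key : B * ((p - q) * ((p - q) ^ 2 + B ^ 2)) = 0 := by
      linear_combination heq + (p * q ^ 2 * B + (-1) * p ^ 2 * q * B) * h3
    rcases mul_eq_zero.mp key with hf | hf
    · exact absurd hf hB
    rcases mul_eq_zero.mp hf with hg | hg
    · exact sub_eq_zero.mp hg
    · exfalso
      have : (p - q) ^ 2 = -(B ^ 2) := by linear_combination hg
      exact hB (Lsq _ _ this).2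
  have Lpowdh : ∀ x : F, x ≠ 0 → (x ^ d) ^ h = 1 := by
    obtain ⟨e, he⟩ := hde
    intro x hx
    rw [← pow_mul, show d * h = 2 * h * e by rw [he]; ring, pow_mul, L1 x hx, one_pow]
  have Lpowd4 : ∀ x : F, x ≠ 0 → (x ^ d) ^ 4 = x ^ h * x := by
    intro x hx
    rw [← pow_mul, show d * 4 = 2 * h * 3 + (h + 1) by omega, pow_add, pow_mul, L1 x hx,
      one_pow, one_mul, pow_add, pow_one]
  -- facts about a nontrivial solution
  have facts : ∀ x : F, (x + a) ^ d + x ^ d = b → x ≠ 0 → x + a ≠ 0 →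
      (x + a) ^ d = b - x ^ d ∧ x ^ d ≠ 0 ∧ (x ^ d) ^ h = 1 ∧
      (b - x ^ d) ^ h = 1 ∧ b - x ^ d ≠ 0 ∧ (x ^ d) ^ 4 = x ^ h * x ∧
      (x ^ h = 1 ∨ x ^ h = -1) ∧
      ((b - x ^ d) ^ 4 = x ^ h * (x + a) ∨ (b - x ^ d) ^ 4 = -(x ^ h * (x + a))) := by
    intro x hsol hx0 hxa
    have hv : (x + a) ^ d = b - x ^ d := by linear_combination hsol
    have h7 : (b - x ^ d) ^ 4 = (x + a) ^ h * (x + a) := by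
      rw [← hv]; exact Lpowd4 (x + a) hxa
    refine ⟨hv, pow_ne_zero _ hx0, Lpowdh x hx0, ?_, ?_, Lpowd4 x hx0, Lpm x hx0, ?_⟩
    · rw [← hv]; exact Lpowdh (x + a) hxa
    · rw [← hv]; exact pow_ne_zero _ hxa
    · rcases Lpm x hx0 with hsx | hsx <;> rcases Lpm (x + a) hxa with hta | hta
      · left; rw [hsx]; rw [hta] at h7; exact h7
      · right; rw [hsx]; rw [hta] at h7; linear_combination h7
      · right; rw [hsx]; rw [hta] at h7; linear_combination h7
      · left; rw [hsx]; rw [hta] at h7; exact h7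
  -- case a = 0
  by_cases ha : a = 0
  · subst ha
    have hsub : {x : F | (x + 0) ^ d + x ^ d = b} ⊆ {0, b ^ 4, -(b ^ 4), 0} := by
      intro x hx
      simp only [Set.mem_setOf_eq, add_zero] at hx
      simp only [Set.mem_insert_iff, Set.mem_singleton_iff]
      by_cases hx0 : x = 0
      · exact Or.inl hx0
      · have hu : x ^ d = -b := by linear_combination -hx + x ^ d * h3
        have h4 : (x ^ d) ^ 4 = x ^ h * x := Lpowd4 x hx0
        rw [hu] at h4
        rcases Lpm x hx0 with hs | hs <;> rw [hs] at h4
        · exact Or.inr (Or.inl (by linear_combination -h4))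
        · exact Or.inr (Or.inr (Or.inl (by linear_combination h4)))
    calc {x : F | (x + 0) ^ d + x ^ d = b}.ncard
        ≤ ({0, b ^ 4, -(b ^ 4), 0} : Set F).ncard :=
          Set.ncard_le_ncard hsub (Set.toFinite _)
      _ ≤ 4 := by
          have a1 := Set.ncard_insert_le (0 : F) ({b ^ 4, -(b ^ 4), 0} : Set F)
          have a2 := Set.ncard_insert_le (b ^ 4) ({-(b ^ 4), 0} : Set F)
          have a3 := Set.ncard_insert_le (-(b ^ 4)) ({0} : Set F)
          have a4 : ({0} : Set F).ncard = 1 := Set.ncard_singleton 0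
          omega
  -- case b = 0
  by_cases hb0 : b = 0
  · have hsub : {x : F | (x + a) ^ d + x ^ d = b} ⊆ {0} := by
      intro x hx
      simp only [Set.mem_setOf_eq] at hx
      exfalso
      by_cases hx0 : x = 0
      · rw [hx0, zero_add, zero_pow hd0, add_zero, hb0] at hx
        exact ha (pow_eq_zero_iff hd0 |>.mp hx)
      by_cases hxa : x + a = 0
      · rw [hxa, zero_pow hd0, zero_add, hb0] at hx
        exact hx0 (pow_eq_zero_iff hd0 |>.mp hx)
      obtain ⟨hv, hu0, huh, hvh, hv0, hu4, hpm, hty⟩ := facts x hx hx0 hxa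
      rw [hb0, zero_sub, Odd.neg_pow hodd, huh] at hvh
      exact h1neg hvh
    calc {x : F | (x + a) ^ d + x ^ d = b}.ncard
        ≤ ({0} : Set F).ncard := Set.ncard_le_ncard hsub (Set.toFinite _)
      _ ≤ 4 := by rw [Set.ncard_singleton]; omega
  -- case b = a^d : only the trivial solutions 0, -a
  by_cases hba : b = a ^ d
  · have hbne : b ≠ 0 := by rw [hba]; exact pow_ne_zero _ ha
    have hb4 : b ^ 4 = a ^ h * a := by rw [hba]; exact Lpowd4 a ha
    have hbh : b ^ h = 1 := by rw [hba]; exact Lpowdh a ha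
    have hsub : {x : F | (x + a) ^ d + x ^ d = b} ⊆ {0, -a, 0, 0} := by
      intro x hx
      simp only [Set.mem_setOf_eq] at hx
      simp only [Set.mem_insert_iff, Set.mem_singleton_iff]
      by_cases hx0 : x = 0
      · exact Or.inl hx0
      by_cases hxa : x + a = 0
      · exact Or.inr (Or.inl (by linear_combination hxa))
      exfalso
      obtain ⟨hv, hu0, huh, hvh, hv0, hu4, hpm, hty⟩ := facts x hx hx0 hxa
      have hcase : x ^ h = a ^ h ∨ x ^ h = -(a ^ h) := by
        rcases hpm with hs | hs <;> rcases Lpm a ha with ht | ht <;> rw [hs, ht]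
        · left; rfl
        · right; norm_num
        · right; norm_num
        · left; rfl
      rcases hty with R3C | R3M
      · -- cubic type
        have Dc : b * (x ^ d) ^ 3 + b ^ 3 * (x ^ d) = b ^ 4 - x ^ h * a := by
          linear_combination (Lpowd4 x hx0) - R3C +
            ((-1) * (x ^ d) * b ^ 3 + 2 * (x ^ d) ^ 2 * b ^ 2 + (-1) * (x ^ d) ^ 3 * b) * h3
        rcases hcase with hsal | hsal
        · have hkey : b * (x ^ d) ^ 3 + b ^ 3 * (x ^ d) = b * (0 : F) ^ 3 + b ^ 3 * 0 := by
            linear_combination Dc + hb4 - a * hsal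
          exact hu0 (Lphi b (x ^ d) 0 hbne hkey)
        · have hkey : b * (x ^ d) ^ 3 + b ^ 3 * (x ^ d) = b * b ^ 3 + b ^ 3 * b := by
            linear_combination Dc - hb4 - a * hsal
          have := Lphi b (x ^ d) b hbne hkey
          exact hv0 (by rw [this]; exact sub_self b)
      · -- mixed type
        have DM : (x ^ d * (b - x ^ d)) ^ 2 + b ^ 2 * (x ^ d * (b - x ^ d)) - b ^ 4
            = x ^ h * a := by
          linear_combination -(Lpowd4 x hx0) - R3M +
            ((-1) * (x ^ d) * b ^ 3 + 2 * (x ^ d) ^ 2 * b ^ 2 + (-2) * (x ^ d) ^ 3 * b +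
              (x ^ d) ^ 4) * h3
        rcases hcase with hsal | hsal
        · have h15 : (x ^ d * (b - x ^ d) - b ^ 2) ^ 2 = 0 := by
            linear_combination DM - hb4 + a * hsal +
              (b ^ 4 + (-1) * (x ^ d) * b ^ 3 + (x ^ d) ^ 2 * b ^ 2) * h3
          have hWb : x ^ d * (b - x ^ d) = b ^ 2 := by
            have := pow_eq_zero_iff (two_ne_zero) |>.mp h15
            linear_combination this
          have h16 : (x ^ d + b) ^ 2 = 0 := by
            linear_combination -hWb + (x ^ d * b) * h3
          have hub : x ^ d = -b := by
            have := pow_eq_zero_iff (two_ne_zero) |>.mp h16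
            linear_combination this
          rw [hub, Odd.neg_pow hodd, hbh] at huh
          exact h1neg huh
        · have h17 : (x ^ d * (b - x ^ d)) * ((x ^ d * (b - x ^ d)) + b ^ 2) = 0 := by
            linear_combination DM + hb4 + a * hsal
          rcases mul_eq_zero.mp h17 with hf | hf
          · exact (mul_ne_zero hu0 hv0) hf
          · have hW : x ^ d * (b - x ^ d) = -(b ^ 2) := by linear_combination hf
            have hWh : (x ^ d * (b - x ^ d)) ^ h = 1 := by
              rw [mul_pow, huh, hvh]; norm_num
            rw [hW, Odd.neg_pow hodd, ← pow_mul, L1 b hbne] at hWh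
            exact h1neg hWh
    calc {x : F | (x + a) ^ d + x ^ d = b}.ncard
        ≤ ({0, -a, 0, 0} : Set F).ncard := Set.ncard_le_ncard hsub (Set.toFinite _)
      _ ≤ 4 := by
          have a1 := Set.ncard_insert_le (0 : F) ({-a, 0, 0} : Set F)
          have a2 := Set.ncard_insert_le (-a) ({0, 0} : Set F)
          have a3 := Set.ncard_insert_le (0 : F) ({0} : Set F)
          have a4 : ({0} : Set F).ncard = 1 := Set.ncard_singleton 0
          omega
  -- main case : a ≠ 0, b ≠ 0, b ≠ a^d
  -- pairing lemma for cubic-type solutions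
  have CC : ∀ x x' u u' s s' : F, u ^ 4 = s * x → (b - u) ^ 4 = s * (x + a) →
      u' ^ 4 = s' * x' → (b - u') ^ 4 = s' * (x' + a) →
      (s = 1 ∨ s = -1) → (s' = 1 ∨ s' = -1) → s * s = 1 →
      x' = x ∨ x' = -x - a := by
    intro x x' u u' s s' R2 R3C R2p R3Cp ps ps' hs2
    have Dc : b * u ^ 3 + b ^ 3 * u = b ^ 4 - s * a := by
      linear_combination R2 - R3C + ((-1) * u * b ^ 3 + 2 * u ^ 2 * b ^ 2 + (-1) * u ^ 3 * b) * h3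
    have Dcp : b * u' ^ 3 + b ^ 3 * u' = b ^ 4 - s' * a := by
      linear_combination R2p - R3Cp +
        ((-1) * u' * b ^ 3 + 2 * u' ^ 2 * b ^ 2 + (-1) * u' ^ 3 * b) * h3
    have hcase : s' = s ∨ s' = -s := by
      rcases ps with hs | hs <;> rcases ps' with hs' | hs' <;> rw [hs, hs']
      · left; rfl
      · right; norm_num
      · right; norm_num
      · left; rfl
    rcases hcase with hss | hss
    · left
      have Ephi : b * u ^ 3 + b ^ 3 * u = b * u' ^ 3 + b ^ 3 * u' := by
        linear_combination Dc - Dcp + a * hss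
      have huu : u' = u := (Lphi b u u' hb0 Ephi).symm
      linear_combination s * R2 + (-s) * R2p +
        (s * u' ^ 3 + u * s * u' ^ 2 + u ^ 2 * s * u' + u ^ 3 * s) * huu +
        ((-1) * s * x') * hss + ((-1) * x' + x) * hs2
    · right
      have E2 : b * u' ^ 3 + b ^ 3 * u' = b * (b - u) ^ 3 + b ^ 3 * (b - u) := by
        linear_combination Dc + Dcp - a * hss + (u * b ^ 3 + (-1) * u ^ 2 * b ^ 2) * h3
      have huu2 : u' = b - u := Lphi b u' (b - u) hb0 E2
      linear_combination s * R2p +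
        ((-1) * s * b ^ 3 + (-1) * s * u' * b ^ 2 + (-1) * s * u' ^ 2 * b + (-1) * s * u' ^ 3 +
          3 * u * s * b ^ 2 + 2 * u * s * u' * b + u * s * u' ^ 2 + (-3) * u ^ 2 * s * b +
          (-1) * u ^ 2 * s * u' + u ^ 3 * s) * huu2 +
        ((-1) * s) * R3C + (s * x') * hss + ((-1) * x' + (-1) * a + (-1) * x) * hs2
  -- pairing lemma for mixed-type solutions
  have MM : ∀ x x' u u' s s' : F, u ^ 4 = s * x → (b - u) ^ 4 = -(s * (x + a)) →
      u' ^ 4 = s' * x' → (b - u') ^ 4 = -(s' * (x' + a)) →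
      (s = 1 ∨ s = -1) → (s' = 1 ∨ s' = -1) → s * s = 1 →
      u ≠ 0 → u' ≠ 0 → b - u ≠ 0 → b - u' ≠ 0 →
      u ^ h = 1 → u' ^ h = 1 → (b - u) ^ h = 1 → (b - u') ^ h = 1 →
      x' = x ∨ x' = -x - a := by
    intro x x' u u' s s' R2 R3M R2p R3Mp ps ps' hs2 hu0 hu0' hv0 hv0' huh huh' hvh hvh'
    have DM : (u * (b - u)) ^ 2 + b ^ 2 * (u * (b - u)) - b ^ 4 = s * a := by
      linear_combination -R2 - R3M +
        ((-1) * u * b ^ 3 + 2 * u ^ 2 * b ^ 2 + (-2) * u ^ 3 * b + u ^ 4) * h3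
    have DMp : (u' * (b - u')) ^ 2 + b ^ 2 * (u' * (b - u')) - b ^ 4 = s' * a := by
      linear_combination -R2p - R3Mp +
        ((-1) * u' * b ^ 3 + 2 * u' ^ 2 * b ^ 2 + (-2) * u' ^ 3 * b + u' ^ 4) * h3
    have hcase : s' = s ∨ s' = -s := by
      rcases ps with hs | hs <;> rcases ps' with hs' | hs' <;> rw [hs, hs']
      · left; rfl
      · right; norm_num
      · right; norm_num
      · left; rfl
    have reconsame : u' = u → s' = s → x' = x := by
      intro huu hss
      linear_combination s * R2 + (-s) * R2p +
        (s * u' ^ 3 + u * s * u' ^ 2 + u ^ 2 * s * u' + u ^ 3 * s) * huu +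
        ((-1) * s * x') * hss + ((-1) * x' + x) * hs2
    rcases hcase with hss | hss
    · have factor : (u * (b - u) - u' * (b - u')) * (u * (b - u) + u' * (b - u') + b ^ 2)
          = 0 := by
        linear_combination DM - DMp - a * hss
      rcases mul_eq_zero.mp factor with hf | hf
      · have hWW : u * (b - u) = u' * (b - u') := by linear_combination hf
        have factor2 : (u' - u) * (u + u' - b) = 0 := by linear_combination hWW
        rcases mul_eq_zero.mp factor2 with hg | hg
        · exact Or.inl (reconsame (by linear_combination hg) hss)
        · right
          have huu2 : u' = b - u := by linear_combination hg
          linear_combination (-1) * s * R2p +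
            (s * b ^ 3 + s * u' * b ^ 2 + s * u' ^ 2 * b + s * u' ^ 3 + (-3) * u * s * b ^ 2 +
              (-2) * u * s * u' * b + (-1) * u * s * u' ^ 2 + 3 * u ^ 2 * s * b +
              u ^ 2 * s * u' + (-1) * u ^ 3 * s) * huu2 +
            s * R3M + ((-1) * s * x') * hss + ((-1) * x' + (-1) * a + (-1) * x) * hs2
      · have hAA : (u + b) ^ 2 = -((u' + b) ^ 2) := by
          linear_combination -hf + (b ^ 2 + u' * b + u * b) * h3
        obtain ⟨h1, h2⟩ := Lsq (u + b) (u' + b) hAA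
        exact Or.inl (reconsame (by linear_combination h2 - h1) hss)
    · exfalso
      have key : (u * (b - u)) * (u' * (b - u'))
          = -((u * (b - u) + u' * (b - u') - b ^ 2) ^ 2) := by
        linear_combination DM + DMp + a * hss +
          (b ^ 4 + (-1) * u' * b ^ 3 + u' ^ 2 * b ^ 2 + (-1) * u * b ^ 3 + u * u' * b ^ 2 +
            (-1) * u * u' ^ 2 * b + u ^ 2 * b ^ 2 + (-1) * u ^ 2 * u' * b +
            u ^ 2 * u' ^ 2) * h3
      by_cases hz : u * (b - u) + u' * (b - u') - b ^ 2 = 0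
      · rw [hz] at key
        have key0 : (u * (b - u)) * (u' * (b - u')) = 0 := by linear_combination key
        rcases mul_eq_zero.mp key0 with hk | hk
        · rcases mul_eq_zero.mp hk with hk' | hk'
          · exact hu0 hk'
          · exact hv0 hk'
        · rcases mul_eq_zero.mp hk with hk' | hk'
          · exact hu0' hk'
          · exact hv0' hk'
      · have e1 : ((u * (b - u)) * (u' * (b - u'))) ^ h = 1 := by
          rw [mul_pow, mul_pow, mul_pow, huh, hvh, huh', hvh']; norm_num
        rw [key, Odd.neg_pow hodd, ← pow_mul, L1 _ hz] at e1
        exact h1neg e1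
  -- find at most four candidate solutions
  have main4 : ∃ y1 y2 y3 y4 : F, ∀ x : F, (x + a) ^ d + x ^ d = b →
      x = y1 ∨ x = y2 ∨ x = y3 ∨ x = y4 := by
    have nontriv : ∀ x : F, (x + a) ^ d + x ^ d = b → x ≠ 0 ∧ x + a ≠ 0 := by
      intro x hx
      constructor
      · intro h0
        rw [h0, zero_add, zero_pow hd0, add_zero] at hx
        exact hba hx.symm
      · intro h0
        have hxa : x = -a := by linear_combination h0
        rw [h0, zero_pow hd0, zero_add, hxa, Even.neg_pow hde] at hx
        exact hba hx.symm
    by_cases hC : ∃ xx : F, ((xx + a) ^ d + xx ^ d = b ∧ xx ≠ 0 ∧ xx + a ≠ 0) ∧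
        (b - xx ^ d) ^ 4 = xx ^ h * (xx + a)
    · obtain ⟨xc, ⟨hcs, hc0, hca⟩, hcC⟩ := hC
      by_cases hM : ∃ xx : F, ((xx + a) ^ d + xx ^ d = b ∧ xx ≠ 0 ∧ xx + a ≠ 0) ∧
          (b - xx ^ d) ^ 4 = -(xx ^ h * (xx + a))
      · obtain ⟨xm, ⟨hms, hm0, hma⟩, hmM⟩ := hM
        refine ⟨xc, -xc - a, xm, -xm - a, ?_⟩
        intro x' hx'
        obtain ⟨hx'0, hx'a⟩ := nontriv x' hx'
        obtain ⟨hv', hu0', huh', hvh', hv0', hu4', hpm', hty'⟩ := facts x' hx' hx'0 hx'a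
        rcases hty' with htC | htM
        · rcases CC xc x' (xc ^ d) (x' ^ d) (xc ^ h) (x' ^ h)
            (Lpowd4 xc hc0) hcC hu4' htC (Lpm xc hc0) hpm' (hs2of xc hc0) with he | he
          · exact Or.inl he
          · exact Or.inr (Or.inl he)
        · obtain ⟨hvm, hum0, humh, hvmh, hvm0, hum4, hpmm, _⟩ := facts xm hms hm0 hma
          rcases MM xm x' (xm ^ d) (x' ^ d) (xm ^ h) (x' ^ h)
            hum4 hmM hu4' htM hpmm hpm' (hs2of xm hm0)
            hum0 hu0' hvm0 hv0' humh huh' hvmh hvh' with he | he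
          · exact Or.inr (Or.inr (Or.inl he))
          · exact Or.inr (Or.inr (Or.inr he))
      · refine ⟨xc, -xc - a, xc, xc, ?_⟩
        intro x' hx'
        obtain ⟨hx'0, hx'a⟩ := nontriv x' hx'
        obtain ⟨hv', hu0', huh', hvh', hv0', hu4', hpm', hty'⟩ := facts x' hx' hx'0 hx'a
        rcases hty' with htC | htM
        · rcases CC xc x' (xc ^ d) (x' ^ d) (xc ^ h) (x' ^ h)
            (Lpowd4 xc hc0) hcC hu4' htC (Lpm xc hc0) hpm' (hs2of xc hc0) with he | he
          · exact Or.inl he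
          · exact Or.inr (Or.inl he)
        · exact absurd ⟨x', ⟨hx', hx'0, hx'a⟩, htM⟩ hM
    · by_cases hM : ∃ xx : F, ((xx + a) ^ d + xx ^ d = b ∧ xx ≠ 0 ∧ xx + a ≠ 0) ∧
          (b - xx ^ d) ^ 4 = -(xx ^ h * (xx + a))
      · obtain ⟨xm, ⟨hms, hm0, hma⟩, hmM⟩ := hM
        refine ⟨xm, -xm - a, xm, xm, ?_⟩
        intro x' hx'
        obtain ⟨hx'0, hx'a⟩ := nontriv x' hx'
        obtain ⟨hv', hu0', huh', hvh', hv0', hu4', hpm', hty'⟩ := facts x' hx' hx'0 hx'a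
        rcases hty' with htC | htM
        · exact absurd ⟨x', ⟨hx', hx'0, hx'a⟩, htC⟩ hC
        · obtain ⟨hvm, hum0, humh, hvmh, hvm0, hum4, hpmm, _⟩ := facts xm hms hm0 hma
          rcases MM xm x' (xm ^ d) (x' ^ d) (xm ^ h) (x' ^ h)
            hum4 hmM hu4' htM hpmm hpm' (hs2of xm hm0)
            hum0 hu0' hvm0 hv0' humh huh' hvmh hvh' with he | he
          · exact Or.inl he
          · exact Or.inr (Or.inl he)
      · refine ⟨0, 0, 0, 0, ?_⟩
        intro x' hx'
        obtain ⟨hx'0, hx'a⟩ := nontriv x' hx'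
        obtain ⟨hv', hu0', huh', hvh', hv0', hu4', hpm', hty'⟩ := facts x' hx' hx'0 hx'a
        rcases hty' with htC | htM
        · exact absurd ⟨x', ⟨hx', hx'0, hx'a⟩, htC⟩ hC
        · exact absurd ⟨x', ⟨hx', hx'0, hx'a⟩, htM⟩ hM
  obtain ⟨y1, y2, y3, y4, hy⟩ := main4
  have hsub : {x : F | (x + a) ^ d + x ^ d = b} ⊆ {y1, y2, y3, y4} := by
    intro x hx
    simp only [Set.mem_setOf_eq] at hx
    simp only [Set.mem_insert_iff, Set.mem_singleton_iff]
    exact hy x hx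
  calc {x : F | (x + a) ^ d + x ^ d = b}.ncard
      ≤ ({y1, y2, y3, y4} : Set F).ncard := Set.ncard_le_ncard hsub (Set.toFinite _)
    _ ≤ 4 := by
        have a1 := Set.ncard_insert_le y1 ({y2, y3, y4} : Set F)
        have a2 := Set.ncard_insert_le y2 ({y3, y4} : Set F)
        have a3 := Set.ncard_insert_le y3 ({y4} : Set F)
        have a4 : ({y4} : Set F).ncard = 1 := Set.ncard_singleton y4
        omega

theorem stmt_7 (n : ℕ) (hn : 0 < n) (hcond : n % 4 = 1)
    (d : ℕ) (hd : d = (3 ^ (n + 1) - 1) / 8 + (3 ^ n - 1) / 2) :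
    ∀ a b : GaloisField 3 n,
      {x : GaloisField 3 n | (x + a) ^ d + x ^ d = b}.ncard ≤ 4 := by
  intro a b
  obtain ⟨m, hm⟩ : ∃ m : ℕ, n = 4 * m + 1 := ⟨n / 4, by omega⟩
  obtain ⟨j, hj⟩ := aux81 m
  have h3n : 3 ^ n = 48 * j + 3 := by
    rw [hm, pow_succ, pow_mul]
    norm_num
    omega
  have h3n1 : 3 ^ (n + 1) = 144 * j + 9 := by
    rw [pow_succ, h3n]
    ring
  have hdval : d = 42 * j + 2 := by
    rw [h3n, h3n1] at hd
    omega
  have h3 : (3 : GaloisField 3 n) = 0 := by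
    have := CharP.cast_eq_zero (GaloisField 3 n) 3
    exact_mod_cast this
  haveI : Fintype (GaloisField 3 n) := Fintype.ofFinite _
  have hcard : Fintype.card (GaloisField 3 n) = 2 * (24 * j + 1) + 1 := by
    rw [← Nat.card_eq_fintype_card, GaloisField.card 3 n hn.ne']
    omega
  exact main_bound (24 * j + 1) d h3 hcard ⟨12 * j, by ring⟩ (by omega) ⟨21 * j + 1, by omega⟩ a b
end

section
/- Let n be an odd positive integer and let d = (3^n + 1)/4 + (3^n - 1)/2. Then the power function F(x) = x^d on GF(3^n) has (-1)-differential uniformity at most 4; that is, for all a, b ∈ GF(3^n), the number of x ∈ GF(3^n) satisfying (x+a)^d + x^d = b is at most 4. -/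
section Aux
variable {F : Type*} [Field F]

lemma aux_neg_sq (hneg : ¬ IsSquare (-1 : F)) {α δ : F} (hδ : δ ≠ 0)
    (h : α ^ 2 = -δ ^ 2) : False := by
  apply hneg
  refine ⟨α * δ⁻¹, ?_⟩
  field_simp
  linear_combination -h

lemma aux_cases (h3 : (3 : F) = 0) (d : ℕ) (hA : ∀ x : F, (x ^ d) ^ 4 = x ^ 2)
    (a b x : F) (hx : (x + a) ^ d + x ^ d = b) :
    (b * x ^ d = a - b ^ 2 ∧ x = (x ^ d) ^ 2) ∨
    (b * x ^ d = -a - b ^ 2 ∧ x = -(x ^ d) ^ 2) ∨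
    ((x ^ d) ^ 2 = b ^ 2 + b * x ^ d + a ∧ x = (x ^ d) ^ 2) ∨
    ((x ^ d) ^ 2 = b ^ 2 + b * x ^ d - a ∧ x = -(x ^ d) ^ 2) := by
  set v := x ^ d with hv
  have hu : (x + a) ^ d = b - v := by linear_combination hx
  have hv4 : v ^ 4 = x ^ 2 := hA x
  have hu4 : (b - v) ^ 4 = (x + a) ^ 2 := by rw [← hu]; exact hA (x + a)
  have hxcases : x = v ^ 2 ∨ x = -v ^ 2 := by
    have h0 : (v ^ 2 - x) * (v ^ 2 + x) = 0 := by linear_combination hv4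
    rcases mul_eq_zero.mp h0 with h | h
    · left; linear_combination -h
    · right; linear_combination h
  have hucases : x + a = (b - v) ^ 2 ∨ x + a = -(b - v) ^ 2 := by
    have h0 : ((b - v) ^ 2 - (x + a)) * ((b - v) ^ 2 + (x + a)) = 0 := by
      linear_combination hu4
    rcases mul_eq_zero.mp h0 with h | h
    · left; linear_combination -h
    · right; linear_combination h
  rcases hxcases with hxc | hxc <;> rcases hucases with huc | huc
  · exact Or.inl ⟨by linear_combination hxc - huc + b*v*h3, hxc⟩
  · exact Or.inr (Or.inr (Or.inl ⟨by linear_combination hxc - huc + (v^2 - b*v)*h3, hxc⟩))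
  · exact Or.inr (Or.inr (Or.inr ⟨by linear_combination huc - hxc + (v^2 - b*v)*h3, hxc⟩))
  · exact Or.inr (Or.inl ⟨by linear_combination huc - hxc + b*v*h3, hxc⟩)

lemma aux_excl (h3 : (3 : F) = 0) (hneg : ¬ IsSquare (-1 : F)) (a b v w α β γ : F)
    (hvα : v = α ^ 2) (huβ : b - v = β ^ 2) (hwγ : w = γ ^ 2) (hw0 : w ≠ 0)
    (hveq : v ^ 2 = b ^ 2 + b * v + a) (hweq : w ^ 2 = b ^ 2 + b * w - a) : False := by
  have hb : b = α ^ 2 + β ^ 2 := by linear_combination hvα + huβ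
  subst hvα hwγ hb
  have key : (γ ^ 2 + (α + β) ^ 2) * (γ ^ 2 + (α - β) ^ 2) = 0 := by
    linear_combination hweq + hveq + (γ^2*(α^2+β^2) + α^4 + α^2*β^2 + β^4) * h3
  rcases mul_eq_zero.mp key with h | h
  · have hab : α + β ≠ 0 := by
      intro h0
      apply hw0
      rw [h0] at h
      simpa using h
    exact aux_neg_sq hneg (α := γ) hab (by linear_combination h)
  · have hab : α - β ≠ 0 := by
      intro h0
      apply hw0
      rw [h0] at h
      simpa using h
    exact aux_neg_sq hneg (α := γ) hab (by linear_combination h)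

omit [Field F] in
lemma card_le_four (S : Set F) (x y z w : F) (h : S ⊆ {x, y, z, w}) : S.ncard ≤ 4 := by
  have hfin : ({x, y, z, w} : Set F).Finite :=
    (Set.finite_singleton w).insert z |>.insert y |>.insert x
  refine le_trans (Set.ncard_le_ncard h hfin) ?_
  refine le_trans (Set.ncard_insert_le _ _) ?_
  have h2 : ({y, z, w} : Set F).ncard ≤ 3 := by
    refine le_trans (Set.ncard_insert_le _ _) ?_
    have h3' : ({z, w} : Set F).ncard ≤ 2 := by
      refine le_trans (Set.ncard_insert_le _ _) ?_
      simp [Set.ncard_singleton]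
    omega
  omega

end Aux

theorem stmt_8 (n : ℕ) (hn : 0 < n) (hcond : Odd n)
    (d : ℕ) (hd : d = (3 ^ n + 1) / 4 + (3 ^ n - 1) / 2) :
    ∀ a b : GaloisField 3 n,
      {x : GaloisField 3 n | (x + a) ^ d + x ^ d = b}.ncard ≤ 4 := by
  obtain ⟨k, hk⟩ := hcond
  have h9 : (9:ℕ) ^ k % 8 = 1 := by rw [Nat.pow_mod]; norm_num
  obtain ⟨i, hi⟩ : ∃ i, (9:ℕ) ^ k = 8 * i + 1 := ⟨9 ^ k / 8, by omega⟩
  have h3n : 3 ^ n = 24 * i + 3 := by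
    subst hk
    rw [pow_succ, pow_mul]
    norm_num [hi]
    ring
  have hd' : d = 18 * i + 2 := by rw [hd, h3n]; omega
  have hd0 : d ≠ 0 := by omega
  haveI : Fintype (GaloisField 3 n) := Fintype.ofFinite _
  have hcard : Fintype.card (GaloisField 3 n) = 3 ^ n := by
    rw [← Nat.card_eq_fintype_card]
    exact GaloisField.card 3 n (by omega)
  have hneg : ¬ IsSquare (-1 : GaloisField 3 n) := by
    rw [FiniteField.isSquare_neg_one_iff, hcard, h3n]
    omega
  have h3 : (3 : GaloisField 3 n) = 0 := by
    have := CharP.cast_eq_zero (GaloisField 3 n) 3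
    exact_mod_cast this
  have hA : ∀ x : GaloisField 3 n, (x ^ d) ^ 4 = x ^ 2 := by
    intro x
    rcases eq_or_ne x 0 with rfl | hx
    · rw [zero_pow hd0]
      simp
    · have h1 : x ^ (3 ^ n * 3) = x ^ 3 := by
        rw [pow_mul, ← hcard, FiniteField.pow_card]
      have h2 : x ^ (3 ^ n * 3) = (x ^ d) ^ 4 * x := by
        have he : 3 ^ n * 3 = d * 4 + 1 := by omega
        rw [he, pow_succ, pow_mul]
      have h4 : (x ^ d) ^ 4 * x = x ^ 2 * x := by
        rw [← h2, h1]; ring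
      exact mul_right_cancel₀ hx h4
  have hEven : ∀ x : GaloisField 3 n, ∃ y, x ^ d = y ^ 2 :=
    fun x => ⟨x ^ (9*i+1), by rw [← pow_mul]; congr 1; omega⟩
  have hnegpow : ∀ x : GaloisField 3 n, (-x) ^ d = x ^ d := by
    intro x
    rw [show d = 2*(9*i+1) from by omega, pow_mul, pow_mul, neg_sq]
  intro a b
  rcases eq_or_ne a 0 with rfl | ha
  · -- a = 0
    rcases Set.eq_empty_or_nonempty {x : GaloisField 3 n | (x + 0) ^ d + x ^ d = b}
      with hS | ⟨x₀, hx₀⟩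
    · rw [hS]; simp
    · apply card_le_four _ x₀ (-x₀) x₀ x₀
      intro x hx
      simp only [Set.mem_setOf_eq, add_zero] at hx hx₀
      have hde : x ^ d = x₀ ^ d := by
        linear_combination (x ^ d - x₀ ^ d) * h3 - hx + hx₀
      have hsq : x ^ 2 = x₀ ^ 2 := by
        rw [← hA x, ← hA x₀, hde]
      have hfac : (x - x₀) * (x + x₀) = 0 := by linear_combination hsq
      simp only [Set.mem_insert_iff, Set.mem_singleton_iff]
      rcases mul_eq_zero.mp hfac with h | h
      · exact Or.inl (by linear_combination h)
      · exact Or.inr (Or.inl (by linear_combination h))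
  rcases eq_or_ne b 0 with rfl | hb0
  · -- b = 0
    apply card_le_four _ a a a a
    intro x hx
    simp only [Set.mem_setOf_eq] at hx
    have h1 : (x + a) ^ d = -(x ^ d) := by linear_combination hx
    have h2 : (x + a) ^ 2 = x ^ 2 := by
      have e1 := hA (x + a)
      rw [h1] at e1
      have e2 := hA x
      linear_combination e2 - e1
    have hfac : a * (2 * x + a) = 0 := by linear_combination h2
    have hx2 : 2 * x + a = 0 := (mul_eq_zero.mp hfac).resolve_left ha
    have : x = a := by linear_combination -hx2 + x * h3
    simp [this]
  rcases eq_or_ne b (a ^ d) with hb' | hbad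
  · -- b = a^d : solutions only 0 and -a
    apply card_le_four _ 0 (-a) 0 0
    intro x hx
    simp only [Set.mem_setOf_eq] at hx
    simp only [Set.mem_insert_iff, Set.mem_singleton_iff]
    by_contra hmem
    push_neg at hmem
    obtain ⟨hx0, hxna, -, -⟩ := hmem
    have hxa : x + a ≠ 0 := fun h => hxna (eq_neg_of_add_eq_zero_left h)
    have hu : (x + a) ^ d = b - x ^ d := by linear_combination hx
    have hv0 : x ^ d ≠ 0 := pow_ne_zero _ hx0
    have huv0 : b - x ^ d ≠ 0 := by rw [← hu]; exact pow_ne_zero _ hxa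
    have hsplit : a = b ^ 2 ∨ a = -b ^ 2 := by
      have h4 : b ^ 4 = a ^ 2 := by rw [hb']; exact hA a
      have h0 : (b ^ 2 - a) * (b ^ 2 + a) = 0 := by linear_combination h4
      rcases mul_eq_zero.mp h0 with h | h
      · exact Or.inl (by linear_combination -h)
      · exact Or.inr (by linear_combination h)
    obtain ⟨δ, hδ⟩ := hEven a
    have hδ0 : δ ≠ 0 := by
      intro h
      apply hb0
      rw [hb', hδ, h]
      ring
    obtain ⟨αx, hαx⟩ := hEven x
    rcases hsplit with hsA | hsA <;>
      rcases aux_cases h3 d hA a b x hx with ⟨h1, h2⟩ | ⟨h1, h2⟩ | ⟨h1, h2⟩ | ⟨h1, h2⟩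
    · -- a = b², case (+,+): b v = 0
      have h0 : b * (x ^ d) = 0 := by linear_combination h1 + hsA
      exact hv0 ((mul_eq_zero.mp h0).resolve_left hb0)
    · -- a = b², case (-,-): v = b
      have h0 : b * (x ^ d - b) = 0 := by linear_combination h1 - hsA - b^2*h3
      have := (mul_eq_zero.mp h0).resolve_left hb0
      exact huv0 (by linear_combination -this)
    · -- a = b², case (+,-): v = -b, contradiction with squares
      have hvb : (x ^ d + b) ^ 2 = 0 := by
        linear_combination h1 + hsA + (b*(x^d) + b^2)*h3
      have hvnb : x ^ d = -b := by
        have := pow_eq_zero_iff (two_ne_zero) |>.mp hvb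
        linear_combination this
      refine aux_neg_sq hneg (α := αx) hδ0 ?_
      linear_combination -hαx + hvnb - hb' - hδ
    · -- a = b², case (-,+): v(v-b)=0
      have h0 : (x ^ d) * (x ^ d - b) = 0 := by linear_combination h1 - hsA
      rcases mul_eq_zero.mp h0 with h | h
      · exact hv0 h
      · exact huv0 (by linear_combination -h)
    · -- a = -b², case (+,+): v = b
      have h0 : b * (x ^ d - b) = 0 := by linear_combination h1 + hsA - b^2*h3
      have := (mul_eq_zero.mp h0).resolve_left hb0
      exact huv0 (by linear_combination -this)
    · -- a = -b², case (-,-): bv = 0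
      have h0 : b * (x ^ d) = 0 := by linear_combination h1 - hsA
      exact hv0 ((mul_eq_zero.mp h0).resolve_left hb0)
    · -- a = -b², case (+,-): v(v-b)=0
      have h0 : (x ^ d) * (x ^ d - b) = 0 := by linear_combination h1 + hsA
      rcases mul_eq_zero.mp h0 with h | h
      · exact hv0 h
      · exact huv0 (by linear_combination -h)
    · -- a = -b², case (-,+): v = -b, contradiction with squares
      have hvb : (x ^ d + b) ^ 2 = 0 := by
        linear_combination h1 - hsA + (b*(x^d) + b^2)*h3
      have hvnb : x ^ d = -b := by
        have := pow_eq_zero_iff (two_ne_zero) |>.mp hvb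
        linear_combination this
      refine aux_neg_sq hneg (α := αx) hδ0 ?_
      linear_combination -hαx + hvnb - hb' - hδ
  · -- main case: a ≠ 0, b ≠ 0, b ≠ a^d
    have h0S : ∀ x : GaloisField 3 n, (x + a) ^ d + x ^ d = b → x ≠ 0 := by
      intro x hx h0
      rw [h0] at hx
      simp only [zero_add, zero_pow hd0, add_zero] at hx
      exact hbad hx.symm
    have hnaS : ∀ x : GaloisField 3 n, (x + a) ^ d + x ^ d = b → x + a ≠ 0 := by
      intro x hx h0
      have hxe : x = -a := eq_neg_of_add_eq_zero_left h0
      rw [hxe] at hx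
      rw [neg_add_cancel, zero_pow hd0, zero_add, hnegpow] at hx
      exact hbad hx.symm
    -- the two "linear case" candidate solutions
    set X1 : GaloisField 3 n := (b⁻¹ * (a - b ^ 2)) ^ 2 with hX1
    set X2 : GaloisField 3 n := -(b⁻¹ * (a + b ^ 2)) ^ 2 with hX2
    have hcase1 : ∀ x : GaloisField 3 n, b * x ^ d = a - b ^ 2 → x = (x ^ d) ^ 2 → x = X1 := by
      intro x h1 h2
      have hv : x ^ d = b⁻¹ * (a - b ^ 2) := by
        field_simp
        linear_combination h1
      rw [h2, hv]
    have hcase2 : ∀ x : GaloisField 3 n, b * x ^ d = -a - b ^ 2 → x = -(x ^ d) ^ 2 → x = X2 := by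
      intro x h1 h2
      have hv : x ^ d = -(b⁻¹ * (a + b ^ 2)) := by
        field_simp
        linear_combination h1
      rw [h2, hv]
      ring
    by_cases hC : ∃ x : GaloisField 3 n, ((x + a) ^ d + x ^ d = b) ∧
        ((x ^ d) ^ 2 = b ^ 2 + b * x ^ d + a ∧ x = (x ^ d) ^ 2)
    · obtain ⟨x₀, hx₀, h₀e, h₀x⟩ := hC
      apply card_le_four _ X1 X2 x₀ (-a - x₀)
      intro x hx
      simp only [Set.mem_setOf_eq] at hx
      simp only [Set.mem_insert_iff, Set.mem_singleton_iff]
      rcases aux_cases h3 d hA a b x hx with ⟨h1, h2⟩ | ⟨h1, h2⟩ | ⟨h1, h2⟩ | ⟨h1, h2⟩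
      · exact Or.inl (hcase1 x h1 h2)
      · exact Or.inr (Or.inl (hcase2 x h1 h2))
      · -- case (+,-): same quadratic as x₀
        have E : ∀ y : GaloisField 3 n, (y ^ d) ^ 2 = b ^ 2 + b * y ^ d + a →
            y = (y ^ d) ^ 2 → (y - (b ^ 2 + a)) ^ 2 = b ^ 2 * y := by
          intro y e1 e2
          have hbv : b * (y ^ d) = y - (b ^ 2 + a) := by linear_combination -e1 - e2
          calc (y - (b ^ 2 + a)) ^ 2 = (b * (y ^ d)) ^ 2 := by rw [hbv]
          _ = b ^ 2 * y := by linear_combination (-(b^2))*e2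
        have hfac : (x - x₀) * (x + x₀ + a) = 0 := by
          linear_combination (E x h1 h2) - (E x₀ h₀e h₀x) + (x - x₀)*(a + b^2)*h3
        rcases mul_eq_zero.mp hfac with h | h
        · exact Or.inr (Or.inr (Or.inl (by linear_combination h)))
        · exact Or.inr (Or.inr (Or.inr (by linear_combination h)))
      · -- case (-,+): impossible, conflicts with x₀
        exfalso
        obtain ⟨α, hα⟩ := hEven x₀
        obtain ⟨β, hβ⟩ := hEven (x₀ + a)
        obtain ⟨γ, hγ⟩ := hEven x
        have hu₀ : b - x₀ ^ d = β ^ 2 := by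
          rw [← hβ]
          linear_combination -hx₀
        exact aux_excl h3 hneg a b (x₀ ^ d) (x ^ d) α β γ hα hu₀ hγ
          (pow_ne_zero _ (h0S x hx)) h₀e h1
    · by_cases hC2 : ∃ x : GaloisField 3 n, ((x + a) ^ d + x ^ d = b) ∧
          ((x ^ d) ^ 2 = b ^ 2 + b * x ^ d - a ∧ x = -(x ^ d) ^ 2)
      · obtain ⟨x₁, hx₁, h₁e, h₁x⟩ := hC2
        apply card_le_four _ X1 X2 x₁ (-a - x₁)
        intro x hx
        simp only [Set.mem_setOf_eq] at hx
        simp only [Set.mem_insert_iff, Set.mem_singleton_iff]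
        rcases aux_cases h3 d hA a b x hx with ⟨h1, h2⟩ | ⟨h1, h2⟩ | ⟨h1, h2⟩ | ⟨h1, h2⟩
        · exact Or.inl (hcase1 x h1 h2)
        · exact Or.inr (Or.inl (hcase2 x h1 h2))
        · exact absurd ⟨x, hx, h1, h2⟩ hC
        · -- case (-,+): same quadratic as x₁
          have E : ∀ y : GaloisField 3 n, (y ^ d) ^ 2 = b ^ 2 + b * y ^ d - a →
              y = -(y ^ d) ^ 2 → (y + (b ^ 2 - a)) ^ 2 = -(b ^ 2 * y) := by
            intro y e1 e2
            have hbv : b * (y ^ d) = -y - b ^ 2 + a := by linear_combination -e1 + e2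
            linear_combination (y + b^2 - a - b*(y^d)) * hbv + b^2 * e2
          have hfac : (x - x₁) * (x + x₁ + a) = 0 := by
            linear_combination (E x h1 h2) - (E x₁ h₁e h₁x) + (x - x₁)*(a - b^2)*h3
          rcases mul_eq_zero.mp hfac with h | h
          · exact Or.inr (Or.inr (Or.inl (by linear_combination h)))
          · exact Or.inr (Or.inr (Or.inr (by linear_combination h)))
      · apply card_le_four _ X1 X2 X1 X1
        intro x hx
        simp only [Set.mem_setOf_eq] at hx
        simp only [Set.mem_insert_iff, Set.mem_singleton_iff]
        rcases aux_cases h3 d hA a b x hx with ⟨h1, h2⟩ | ⟨h1, h2⟩ | ⟨h1, h2⟩ | ⟨h1, h2⟩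
        · exact Or.inl (hcase1 x h1 h2)
        · exact Or.inr (Or.inl (hcase2 x h1 h2))
        · exact absurd ⟨x, hx, h1, h2⟩ hC
        · exact absurd ⟨x, hx, h1, h2⟩ hC2
end

section
/- Let n be a positive integer with n ≡ 1 (mod 4) and let d = (3^((n+1)/2) - 1)/2. Then gcd(d, 3^n - 1) = 1, and consequently the map x ↦ x^d is a bijection (permutation) of GF(3^n). -/
theorem stmt_10 (n : ℕ) (hn : 0 < n) (hcond : n % 4 = 1)
    (d : ℕ) (hd : d = (3 ^ ((n + 1) / 2) - 1) / 2) :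
    Nat.gcd d (3 ^ n - 1) = 1 ∧
      Function.Bijective (fun x : GaloisField 3 n => x ^ d) := by
  set k : ℕ := (n + 1) / 2 with hk
  obtain ⟨m, hm⟩ : ∃ m, n = 4 * m + 1 := ⟨n / 4, by omega⟩
  have hkm : k = 2 * m + 1 := by omega
  -- 3^k is odd, so 2 ∣ 3^k - 1
  have hodd : Odd (3 ^ k) := Odd.pow ⟨1, by norm_num⟩
  have h2dvd : 2 ∣ 3 ^ k - 1 := by
    obtain ⟨t, ht⟩ := hodd
    omega
  have h2d : 2 * d = 3 ^ k - 1 := by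
    rw [hd, Nat.mul_div_cancel' h2dvd]
  -- 3^k % 4 = 3
  have hk4 : 3 ^ k % 4 = 3 := by
    have h9 : 9 ^ m % 4 = 1 := by
      rw [Nat.pow_mod]; norm_num
    have : 3 ^ k = 3 * 9 ^ m := by
      rw [hkm, pow_succ, pow_mul]; ring
    rw [this, Nat.mul_mod, h9]
  -- d is odd
  have hdodd : ¬ 2 ∣ d := by
    intro ⟨t, ht⟩
    have h1 : (1:ℕ) ≤ 3 ^ k := Nat.one_le_pow _ _ (by norm_num)
    omega
  have hgcdkn : Nat.gcd k n = 1 := by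
    have h1 : Nat.gcd k n ∣ k := Nat.gcd_dvd_left _ _
    have h2 : Nat.gcd k n ∣ n := Nat.gcd_dvd_right _ _
    have h3 : Nat.gcd k n ∣ 2 * k - n := Nat.dvd_sub (h1.mul_left 2) h2
    have h4 : 2 * k - n = 1 := by omega
    rw [h4] at h3
    exact Nat.dvd_one.mp h3
  have hmain : Nat.gcd d (3 ^ n - 1) = 1 := by
    set g : ℕ := Nat.gcd d (3 ^ n - 1) with hg
    have hgd : g ∣ d := Nat.gcd_dvd_left _ _
    have hgn : g ∣ 3 ^ n - 1 := Nat.gcd_dvd_right _ _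
    have hgk : g ∣ 3 ^ k - 1 := h2d ▸ (hgd.mul_left 2)
    have hcast : ∀ m : ℕ, g ∣ 3 ^ m - 1 → ((3 : ZMod g)) ^ m = 1 := by
      intro m hdvd
      have h1 : (1:ℕ) ≤ 3 ^ m := Nat.one_le_pow _ _ (by norm_num)
      have : (3:ℕ) ^ m ≡ 1 [MOD g] := ((Nat.modEq_iff_dvd' h1).mpr hdvd).symm
      have := (ZMod.natCast_eq_natCast_iff _ _ _).mpr this
      push_cast at this
      exact this
    have h3k : (3 : ZMod g) ^ k = 1 := hcast k hgk
    have h3n : (3 : ZMod g) ^ n = 1 := hcast n hgn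
    have h31 : (3 : ZMod g) = 1 := by
      have := pow_gcd_eq_one.mpr ⟨h3k, h3n⟩
      rwa [hgcdkn, pow_one] at this
    have hg2 : g ∣ 2 := by
      have : ((3:ℕ) : ZMod g) = ((1:ℕ) : ZMod g) := by push_cast; exact h31
      have := (ZMod.natCast_eq_natCast_iff _ _ _).mp this
      exact (Nat.modEq_iff_dvd' (by norm_num)).mp this.symm
    rcases (Nat.dvd_prime Nat.prime_two).mp hg2 with h | h
    · exact h
    · exact absurd (h ▸ hgd) hdodd
  refine ⟨hmain, ?_⟩
  have hd0 : d ≠ 0 := by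
    have h1 : (1:ℕ) ≤ 3 ^ k := Nat.one_le_pow _ _ (by norm_num)
    have h9 : (3:ℕ) ^ 1 ≤ 3 ^ k := Nat.pow_le_pow_right (by norm_num) (by omega)
    omega
  have hcardK : Nat.card (GaloisField 3 n) = 3 ^ n := GaloisField.card 3 n hn.ne'
  have hcardU : Nat.card (GaloisField 3 n)ˣ = 3 ^ n - 1 := by
    rw [Nat.card_units, hcardK]
  have hcop : (Nat.card (GaloisField 3 n)ˣ).Coprime d := by
    rw [hcardU]
    exact (Nat.coprime_comm.mp hmain)
  have hunits : Function.Bijective (· ^ d : (GaloisField 3 n)ˣ → (GaloisField 3 n)ˣ) :=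
    Nat.Coprime.pow_left_bijective hcop
  rw [Finite.injective_iff_bijective.symm]
  intro a b hab
  simp only at hab
  rcases eq_or_ne a 0 with rfl | ha
  · rcases eq_or_ne b 0 with rfl | hb
    · rfl
    · exfalso
      rw [zero_pow hd0] at hab
      exact hb (pow_eq_zero_iff hd0 |>.mp hab.symm)
  · rcases eq_or_ne b 0 with rfl | hb
    · exfalso
      rw [zero_pow hd0] at hab
      exact ha (pow_eq_zero_iff hd0 |>.mp hab)
    · have : (Units.mk0 a ha) ^ d = (Units.mk0 b hb) ^ d := by
        ext
        simpa using hab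
      have := hunits.injective this
      simpa [Units.ext_iff] using this
end

section
/- Let n be a positive integer with n ≡ 1 (mod 4) and let d = (3^(n+1) - 1)/8. Then gcd(d, 3^n - 1) = 1, and consequently the map x ↦ x^d is a bijection (permutation) of GF(3^n). -/
theorem stmt_11 (n : ℕ) (hn : 0 < n) (hcond : n % 4 = 1)
    (d : ℕ) (hd : d = (3 ^ (n + 1) - 1) / 8) :
    Nat.gcd d (3 ^ n - 1) = 1 ∧
      Function.Bijective (fun x : GaloisField 3 n => x ^ d) := by
  -- n = 4k+1
  obtain ⟨k, hk⟩ : ∃ k, n = 4 * k + 1 := ⟨n / 4, by omega⟩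
  have hmod : 3 ^ (n + 1) % 16 = 9 := by
    subst hk
    have : (3:ℕ) ^ (4 * k + 1 + 1) = (3 ^ 4) ^ k * 3 ^ 2 := by
      rw [← pow_mul, ← pow_add]
    rw [this, Nat.mul_mod, Nat.pow_mod]
    norm_num
  have h3 : 8 ≤ 3 ^ (n + 1) := by
    calc (8:ℕ) ≤ 3 ^ 2 := by norm_num
    _ ≤ 3 ^ (n + 1) := Nat.pow_le_pow_right (by norm_num) (by omega)
  have h8d : 8 * d = 3 ^ (n + 1) - 1 := by
    have : (8:ℕ) ∣ 3 ^ (n + 1) - 1 := by omega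
    rw [hd, Nat.mul_div_cancel' this]
  have hdodd : d % 2 = 1 := by omega
  have hkey : 8 * d = 3 * (3 ^ n - 1) + 2 := by
    have h1 : (1:ℕ) ≤ 3 ^ n := Nat.one_le_pow _ _ (by norm_num)
    have : (3:ℕ) ^ (n + 1) = 3 * 3 ^ n := by ring
    omega
  have hgcd : Nat.gcd d (3 ^ n - 1) = 1 := by
    set g := Nat.gcd d (3 ^ n - 1) with hg
    have hgd : g ∣ d := Nat.gcd_dvd_left _ _
    have hgN : g ∣ 3 ^ n - 1 := Nat.gcd_dvd_right _ _
    have h2 : g ∣ 2 := by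
      have h8 : g ∣ 8 * d := hgd.mul_left 8
      rw [hkey] at h8
      have hh := Nat.dvd_sub h8 (hgN.mul_left 3)
      have he : 3 * (3 ^ n - 1) + 2 - 3 * (3 ^ n - 1) = 2 := by omega
      rwa [he] at hh
    rcases (Nat.dvd_prime Nat.prime_two).mp h2 with h | h
    · exact h
    · exfalso
      obtain ⟨c, hc⟩ := hgd
      rw [h] at hc
      omega
  refine ⟨hgcd, ?_⟩
  have hcard : Nat.card (GaloisField 3 n)ˣ = 3 ^ n - 1 := by
    rw [Nat.card_units, GaloisField.card 3 n hn.ne']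
  have hcop : (Nat.card (GaloisField 3 n)ˣ).Coprime d := by
    rw [hcard, Nat.coprime_comm]
    exact hgcd
  have hbij := hcop.pow_left_bijective
  have hdpos : 0 < d := by omega
  constructor
  · intro x y hxy
    simp only at hxy
    rcases eq_or_ne x 0 with rfl | hx
    · rcases eq_or_ne y 0 with rfl | hy
      · rfl
      · exfalso; apply hy
        have : y ^ d = 0 := by rw [← hxy, zero_pow hdpos.ne']
        exact pow_eq_zero_iff hdpos.ne' |>.mp this
    · rcases eq_or_ne y 0 with rfl | hy
      · exfalso; apply hx
        have : x ^ d = 0 := by rw [hxy, zero_pow hdpos.ne']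
        exact pow_eq_zero_iff hdpos.ne' |>.mp this
      · have := hbij.injective (a₁ := Units.mk0 x hx) (a₂ := Units.mk0 y hy) (by
          ext
          simpa using hxy)
        simpa using congrArg Units.val this
  · intro y
    rcases eq_or_ne y 0 with rfl | hy
    · exact ⟨0, by simp [zero_pow hdpos.ne']⟩
    · obtain ⟨u, hu⟩ := hbij.surjective (Units.mk0 y hy)
      exact ⟨u, by simpa using congrArg Units.val hu⟩
end

section
/- Let n be a positive integer with n ≡ 1 (mod 4), let d = (3^((n+1)/2) - 1)/2, and let b ∈ GF(3^n). Then there do not simultaneously exist x₁, x₂ ∈ GF(3^n) such that (x₁+1)^d + x₁^d = b, (x₂+1)^d + x₂^d = b, both x₁ and x₁+1 are nonzero squares in GF(3^n), and both x₂ and x₂+1 are nonsquares in GF(3^n). -/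
theorem stmt_13 (n : ℕ) (hn : 0 < n) (hcond : n % 4 = 1)
    (d : ℕ) (hd : d = (3 ^ ((n + 1) / 2) - 1) / 2) (b : GaloisField 3 n) :
    ¬ ∃ x₁ x₂ : GaloisField 3 n,
        (x₁ + 1) ^ d + x₁ ^ d = b ∧ (x₂ + 1) ^ d + x₂ ^ d = b ∧
        (x₁ ≠ 0 ∧ IsSquare x₁) ∧ (x₁ + 1 ≠ 0 ∧ IsSquare (x₁ + 1)) ∧
        ¬ IsSquare x₂ ∧ ¬ IsSquare (x₂ + 1) := by
  rintro ⟨x₁, x₂, hb1, hb2, ⟨hx1ne, hx1sq⟩, ⟨hx11ne, hx11sq⟩, hx2ns, hx21ns⟩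
  haveI : Fintype (GaloisField 3 n) := Fintype.ofFinite _
  haveI : Fact (2 < 3) := ⟨by norm_num⟩
  have hchar : ringChar (GaloisField 3 n) = 3 := ringChar.eq _ 3
  have hchar2 : ringChar (GaloisField 3 n) ≠ 2 := by rw [hchar]; norm_num
  have hcard : Fintype.card (GaloisField 3 n) = 3 ^ n := by
    rw [← Nat.card_eq_fintype_card]; exact GaloisField.card 3 n (by omega)
  -- numerics
  set m := (n + 1) / 2 with hm
  have h2m : 2 * m = n + 1 := by omega
  have htodd : (3:ℕ) ^ m % 2 = 1 := by
    have := Nat.pow_mod 3 m 2; simpa using this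
  have htpos : 1 ≤ (3:ℕ) ^ m := Nat.one_le_pow _ _ (by norm_num)
  have hqodd : (3:ℕ) ^ n % 2 = 1 := by
    have := Nat.pow_mod 3 n 2; simpa using this
  have hqpos : 1 ≤ (3:ℕ) ^ n := Nat.one_le_pow _ _ (by norm_num)
  set h := ((3:ℕ) ^ n - 1) / 2 with hh
  have h2d : 2 * d + 1 = 3 ^ m := by omega
  have h2h : 2 * h + 1 = 3 ^ n := by omega
  have hAA : (3:ℕ) ^ m * 3 ^ m = 3 * 3 ^ n := by
    rw [← pow_add, ← pow_succ']; congr 1; omega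
  have key : d * (3 ^ m + 1) = 3 * h + 1 := by nlinarith [h2d, h2h, hAA]
  -- m is odd since n ≡ 1 (mod 4); hence d is odd
  have hmodd : m % 2 = 1 := by omega
  have ht4 : (3:ℕ) ^ m % 4 = 3 := by
    obtain ⟨k, hk⟩ : ∃ k, m = 2 * k + 1 := ⟨m / 2, by omega⟩
    have h9 : (9:ℕ) ^ k % 4 = 1 := by
      have := Nat.pow_mod 9 k 4; simpa using this
    have : (3:ℕ) ^ m = 9 ^ k * 3 := by
      rw [hk, pow_succ, pow_mul]; norm_num
    omega
  have hdodd : Odd d := by rw [Nat.odd_iff]; omega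
  have htoddO : Odd ((3:ℕ) ^ m) := by rw [Nat.odd_iff]; exact htodd
  have hhalf : Fintype.card (GaloisField 3 n) / 2 = h := by rw [hcard]; omega
  -- quadratic character values
  have sq_pow : ∀ x : GaloisField 3 n, x ≠ 0 → IsSquare x → x ^ h = 1 := by
    intro x hx hs
    rw [← hhalf]; exact (FiniteField.isSquare_iff hchar2 hx).mp hs
  have nsq_pow : ∀ x : GaloisField 3 n, ¬ IsSquare x → x ^ h = -1 := by
    intro x hs
    have hx : x ≠ 0 := by rintro rfl; exact hs ⟨0, by simp⟩
    rcases FiniteField.pow_dichotomy hchar2 hx with hc | hc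
    · exact absurd ((FiniteField.isSquare_iff hchar2 hx).mpr hc) hs
    · rw [← hhalf]; exact hc
  -- the "norm" identity
  have npow : ∀ x : GaloisField 3 n, (x ^ d) ^ (3 ^ m) * x ^ d = (x ^ h) ^ 3 * x := by
    intro x
    rw [← pow_mul, ← pow_add, ← pow_mul, ← pow_succ]
    congr 1
    have : d * 3 ^ m + d = d * (3 ^ m + 1) := by ring
    omega
  have hx2ne : x₂ ≠ 0 := by rintro rfl; exact hx2ns ⟨0, by simp⟩
  have hx21ne : x₂ + 1 ≠ 0 := by
    intro hc; exact hx21ns (hc ▸ ⟨0, by simp⟩)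
  set r₁ : GaloisField 3 n := x₁ ^ d with hr₁
  set s₁ : GaloisField 3 n := (x₁ + 1) ^ d with hs₁
  set r₂ : GaloisField 3 n := x₂ ^ d with hr₂
  set s₂ : GaloisField 3 n := (x₂ + 1) ^ d with hs₂
  have A2 : r₁ ^ (3 ^ m) * r₁ = x₁ := by
    rw [hr₁, npow, sq_pow x₁ hx1ne hx1sq]; ring
  have A1 : s₁ ^ (3 ^ m) * s₁ = x₁ + 1 := by
    rw [hs₁, npow, sq_pow (x₁ + 1) hx11ne hx11sq]; ring
  have B2 : r₂ ^ (3 ^ m) * r₂ = -x₂ := by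
    rw [hr₂, npow, nsq_pow x₂ hx2ns]; ring
  have B1 : s₂ ^ (3 ^ m) * s₂ = -(x₂ + 1) := by
    rw [hs₂, npow, nsq_pow (x₂ + 1) hx21ns]; ring
  have hbb1 : b = s₁ + r₁ := hb1.symm
  have hbb2 : b = s₂ + r₂ := hb2.symm
  have hbt1 : b ^ (3 ^ m) = s₁ ^ (3 ^ m) + r₁ ^ (3 ^ m) := by
    rw [hbb1]; exact add_pow_char_pow s₁ r₁ 3 m
  have hbt2 : b ^ (3 ^ m) = s₂ ^ (3 ^ m) + r₂ ^ (3 ^ m) := by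
    rw [hbb2]; exact add_pow_char_pow s₂ r₂ 3 m
  have E1 : b ^ (3 ^ m) * r₁ + b * r₁ ^ (3 ^ m) = b ^ (3 ^ m) * b - 1 := by
    rw [hbt1, hbb1]
    linear_combination A2 - A1
  have E2 : b ^ (3 ^ m) * s₂ + b * s₂ ^ (3 ^ m) = b ^ (3 ^ m) * b - 1 := by
    rw [hbt2, hbb2]
    linear_combination B1 - B2
  have hbne : b ≠ 0 := by
    rintro rfl
    rw [zero_pow (by positivity : (3:ℕ)^m ≠ 0)] at E1
    simp only [zero_mul, mul_zero, add_zero, zero_add, zero_sub] at E1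
    exact one_ne_zero (by linear_combination E1 : (1:GaloisField 3 n) = 0)
  -- injectivity: r₁ = s₂
  have hz : b ^ (3 ^ m) * (r₁ - s₂) + b * (r₁ - s₂) ^ (3 ^ m) = 0 := by
    rw [sub_pow_char_pow r₁ s₂ m (p := 3)]; linear_combination E1 - E2
  have h3K : (3 : GaloisField 3 n) = 0 := by
    have := CharP.cast_eq_zero (GaloisField 3 n) 3
    exact_mod_cast this
  have hreq : r₁ = s₂ := by
    by_contra hne
    have hzne : r₁ - s₂ ≠ 0 := sub_ne_zero.mpr hne
    set z : GaloisField 3 n := r₁ - s₂ with hzdef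
    have hi : b ^ (3 ^ m) * z = -(b * z ^ (3 ^ m)) := by linear_combination hz
    have hii : (b ^ (3 ^ m) * z) ^ (3 ^ m) = (-(b * z ^ (3 ^ m))) ^ (3 ^ m) := by rw [hi]
    have hbq : (b ^ ((3:ℕ) ^ m)) ^ ((3:ℕ) ^ m) = b ^ 3 := by
      rw [← pow_mul, hAA, mul_comm, pow_mul, ← hcard, FiniteField.pow_card]
    have hzq : (z ^ ((3:ℕ) ^ m)) ^ ((3:ℕ) ^ m) = z ^ 3 := by
      rw [← pow_mul, hAA, mul_comm, pow_mul, ← hcard, FiniteField.pow_card]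
    rw [Odd.neg_pow htoddO, mul_pow, mul_pow, hbq, hzq] at hii
    have hfact : b ^ ((3:ℕ) ^ m) * (z * (z - b) * (z + b)) = 0 := by
      linear_combination (-(b^2)) * hi + hii
    have hbtne : b ^ ((3:ℕ) ^ m) ≠ 0 := pow_ne_zero _ hbne
    rcases mul_eq_zero.mp hfact with hc | hc
    · exact hbtne hc
    rcases mul_eq_zero.mp hc with hc' | hc'
    · rcases mul_eq_zero.mp hc' with hc'' | hc''
      · exact hzne hc''
      · -- z = b
        have zb : z = b := by linear_combination hc''
        rw [zb] at hz
        have hzero : b ^ ((3:ℕ) ^ m) * b = 0 := by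
          linear_combination 2 * hz + (-(b ^ ((3:ℕ) ^ m) * b)) * h3K
        exact mul_ne_zero hbtne hbne hzero
    · -- z = -b
      have zb : z = -b := by linear_combination hc'
      rw [zb, Odd.neg_pow htoddO] at hz
      have hzero : b ^ ((3:ℕ) ^ m) * b = 0 := by
        linear_combination hz + (b ^ ((3:ℕ) ^ m) * b) * h3K
      exact mul_ne_zero hbtne hbne hzero
  -- contradiction: r₁ is a square, s₂ is not
  have hr1sq : IsSquare r₁ := by
    obtain ⟨c, hc⟩ := hx1sq
    exact ⟨c ^ d, by rw [hr₁, hc, mul_pow]⟩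
  have hr1ne : r₁ ≠ 0 := pow_ne_zero _ hx1ne
  have h1 : r₁ ^ h = 1 := sq_pow r₁ hr1ne hr1sq
  have h2 : s₂ ^ h = -1 := by
    rw [hs₂, ← pow_mul, mul_comm d h, pow_mul, nsq_pow (x₂ + 1) hx21ns,
      Odd.neg_pow hdodd, one_pow]
  rw [hreq, h2] at h1
  exact CharP.neg_one_ne_one (GaloisField 3 n) 3 h1
end

section
/- Let n be a positive integer with n ≡ 1 (mod 4), let d = (3^((n+1)/2) - 1)/2, and let b ∈ GF(3^n). Then there do not simultaneously exist x₃, x₄ ∈ GF(3^n) such that (x₃+1)^d + x₃^d = b, (x₄+1)^d + x₄^d = b, x₃+1 is a nonzero square and x₃ is a nonsquare in GF(3^n), and x₄+1 is a nonsquare and x₄ is a nonzero square in GF(3^n). -/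
private lemma pow3_mod4 (k : ℕ) : 3 ^ (2 * k + 1) % 4 = 3 := by
  induction k with
  | zero => rfl
  | succ k ih =>
    have h : 2 * (k + 1) + 1 = (2 * k + 1) + 2 := by ring
    rw [h, pow_add, Nat.mul_mod, ih]
    norm_num

private lemma aux_main {F : Type*} [Field F] [Fintype F]
    (char3 : (3 : F) = 0) (hchar2 : ringChar F ≠ 2)
    (q s d e : ℕ)
    (hcard : Fintype.card F = q)
    (hq2e : q = 2 * e + 1) (heodd : Odd e) (hdodd : Odd d) (hs2d : s = 2 * d + 1)
    (hss : s * s = 3 * q) (hkey : d * (s + 1) = 3 * e + 1)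
    (hfrob : ∀ u v : F, (u + v) ^ s = u ^ s + v ^ s)
    (hfrobs : ∀ u v : F, (u - v) ^ s = u ^ s - v ^ s)
    (hneg1 : ¬ IsSquare (-1 : F))
    (b x₃ x₄ : F)
    (h3 : (x₃ + 1) ^ d + x₃ ^ d = b) (h4 : (x₄ + 1) ^ d + x₄ ^ d = b)
    (ha0 : x₃ + 1 ≠ 0) (hasq : IsSquare (x₃ + 1)) (hcns : ¬ IsSquare x₃)
    (ha'ns : ¬ IsSquare (x₄ + 1)) (hc'0 : x₄ ≠ 0) (hc'sq : IsSquare x₄) : False := by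
  have hc0 : x₃ ≠ 0 := fun h => hcns (by rw [h]; exact IsSquare.zero)
  have ha'0 : x₄ + 1 ≠ 0 := fun h => ha'ns (by rw [h]; exact IsSquare.zero)
  have hcarde : Fintype.card F / 2 = e := by rw [hcard]; omega
  have hdi : ∀ t : F, t ≠ 0 → t ^ e = 1 ∨ t ^ e = -1 := by
    intro t ht
    have h := FiniteField.pow_dichotomy hchar2 ht
    rwa [hcarde] at h
  have hsq1 : ∀ t : F, t ≠ 0 → IsSquare t → t ^ e = 1 := by
    intro t ht hsq
    have h := (FiniteField.isSquare_iff hchar2 ht).mp hsq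
    rwa [hcarde] at h
  have hnsq : ∀ t : F, ¬ IsSquare t → t ^ e = -1 := by
    intro t ht
    have ht0 : t ≠ 0 := fun h => ht (by rw [h]; exact IsSquare.zero)
    rcases hdi t ht0 with h | h
    · exact absurd ((FiniteField.isSquare_iff hchar2 ht0).mpr (by rwa [hcarde])) ht
    · exact h
  have hsqe2 : ∀ t : F, t ≠ 0 → (t ^ e) ^ 2 = 1 := by
    intro t ht; rcases hdi t ht with h | h <;> rw [h] <;> ring
  have hm1e : (-1 : F) ^ e = -1 := hnsq _ hneg1
  have h2ne : (2 : F) ≠ 0 := by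
    intro h
    have h1 : (1 : F) = 0 := by linear_combination char3 - h
    exact one_ne_zero h1
  have hF1 : ∀ t : F, t ≠ 0 → t ^ (d * (s + 1)) = t ^ e * t := by
    intro t ht
    have h1 : t ^ (d * (s + 1)) = (t ^ e) ^ 3 * t := by
      rw [hkey, pow_succ, mul_comm 3 e, pow_mul]
    rw [h1]
    rcases hdi t ht with h | h <;> rw [h] <;> ring
  set α := (x₃ + 1) ^ d with hα
  set γ := x₃ ^ d with hγ
  set α' := (x₄ + 1) ^ d with hα'
  set γ' := x₄ ^ d with hγ'
  have hαe : α ^ e = 1 := by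
    rw [hα, ← pow_mul, mul_comm d e, pow_mul, hsq1 _ ha0 hasq, one_pow]
  have hγe : γ ^ e = -1 := by
    rw [hγ, ← pow_mul, mul_comm d e, pow_mul, hnsq _ hcns, hdodd.neg_one_pow]
  have hα'e : α' ^ e = -1 := by
    rw [hα', ← pow_mul, mul_comm d e, pow_mul, hnsq _ ha'ns, hdodd.neg_one_pow]
  have hγ'e : γ' ^ e = 1 := by
    rw [hγ', ← pow_mul, mul_comm d e, pow_mul, hsq1 _ hc'0 hc'sq, one_pow]
  have hαs1 : α ^ (s + 1) = x₃ + 1 := by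
    rw [hα, ← pow_mul, hF1 _ ha0, hsq1 _ ha0 hasq, one_mul]
  have hγs1 : γ ^ (s + 1) = -x₃ := by
    rw [hγ, ← pow_mul, hF1 _ hc0, hnsq _ hcns]; ring
  have hα's1 : α' ^ (s + 1) = -(x₄ + 1) := by
    rw [hα', ← pow_mul, hF1 _ ha'0, hnsq _ ha'ns]; ring
  have hγ's1 : γ' ^ (s + 1) = x₄ := by
    rw [hγ', ← pow_mul, hF1 _ hc'0, hsq1 _ hc'0 hc'sq, one_mul]
  set δ := γ - α with hδ
  set ε := α' - γ' with hε
  have hexp : ∀ u v : F, (u + v) ^ (s + 1) + (v - u) ^ (s + 1)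
      = 2 * (u ^ (s + 1) + v ^ (s + 1)) := by
    intro u v
    rw [pow_succ, pow_succ, pow_succ, pow_succ, hfrob u v, hfrobs v u]
    ring
  have e1 : b ^ (s + 1) + δ ^ (s + 1) = -1 := by
    have h := hexp α γ
    rw [h3, hαs1, hγs1] at h
    rw [hδ, h]
    linear_combination char3
  have e2 : b ^ (s + 1) + ε ^ (s + 1) = 1 := by
    have hb4 : γ' + α' = b := by rw [add_comm]; exact h4
    have h := hexp γ' α'
    rw [hb4, hγ's1, hα's1] at h
    rw [hε, h]
    linear_combination -char3
  have hδ0 : δ ≠ 0 := by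
    intro h
    have hγα : γ = α := by rw [hδ] at h; linear_combination h
    have h1 : (-1 : F) = 1 := by rw [← hγe, hγα, hαe]
    exact h2ne (by linear_combination -h1)
  have hε0 : ε ≠ 0 := by
    intro h
    have hγα : α' = γ' := by rw [hε] at h; linear_combination h
    have h1 : (-1 : F) = 1 := by rw [← hα'e, hγα, hγ'e]
    exact h2ne (by linear_combination -h1)
  have hb0 : b ≠ 0 := by
    intro h
    rw [h, zero_pow (by omega : s + 1 ≠ 0)] at e1
    have hδs : δ ^ (s + 1) = -1 := by linear_combination e1
    apply hneg1
    refine ⟨δ ^ (d + 1), ?_⟩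
    rw [← hδs, ← pow_add]
    congr 1
    omega
  have hbs0 : b ^ (s + 1) ≠ 0 := pow_ne_zero _ hb0
  set x := δ * b⁻¹ with hx
  set y := ε * b⁻¹ with hy
  have hx0 : x ≠ 0 := mul_ne_zero hδ0 (inv_ne_zero hb0)
  have hy0 : y ≠ 0 := mul_ne_zero hε0 (inv_ne_zero hb0)
  set U := x ^ (s + 1) with hU
  set V := y ^ (s + 1) with hV
  have hU0 : U ≠ 0 := pow_ne_zero _ hx0
  have hV0 : V ≠ 0 := pow_ne_zero _ hy0
  have hUbs : U * b ^ (s + 1) = δ ^ (s + 1) := by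
    rw [hU, hx, mul_pow, inv_pow]
    field_simp
  have hVbs : V * b ^ (s + 1) = ε ^ (s + 1) := by
    rw [hV, hy, mul_pow, inv_pow]
    field_simp
  have hV1U : V = 1 - U := by
    have hcan : V * b ^ (s + 1) = (1 - U) * b ^ (s + 1) := by
      rw [hVbs]
      linear_combination e1 + e2 + hUbs - b ^ (s + 1) * char3
    exact mul_right_cancel₀ hbs0 hcan
  have hUe : U ^ e = 1 := by
    rw [hU, ← pow_mul, mul_comm (s + 1) e, pow_mul]
    rcases hdi x hx0 with h | h <;> rw [h]
    · exact one_pow _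
    · exact Even.neg_one_pow ⟨d + 1, by omega⟩
  have hVe : V ^ e = 1 := by
    rw [hV, ← pow_mul, mul_comm (s + 1) e, pow_mul]
    rcases hdi y hy0 with h | h <;> rw [h]
    · exact one_pow _
    · exact Even.neg_one_pow ⟨d + 1, by omega⟩
  have hUd : U ^ d = x ^ e * x := by
    rw [hU, ← pow_mul, mul_comm (s + 1) d, hF1 x hx0]
  have hUx2 : U ^ (d * 2) = x ^ 2 := by
    rw [pow_mul, hUd, mul_pow, hsqe2 x hx0, one_mul]
  have hUs : U ^ s = x ^ 2 * U := by
    rw [hs2d, show 2 * d + 1 = d * 2 + 1 by ring, pow_succ, hUx2, mul_comm]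
  have hVd : V ^ d = y ^ e * y := by
    rw [hV, ← pow_mul, mul_comm (s + 1) d, hF1 y hy0]
  have hVy2 : V ^ (d * 2) = y ^ 2 := by
    rw [pow_mul, hVd, mul_pow, hsqe2 y hy0, one_mul]
  have hVs : V ^ s = y ^ 2 * V := by
    rw [hs2d, show 2 * d + 1 = d * 2 + 1 by ring, pow_succ, hVy2, mul_comm]
  set G := U ^ s - U with hG
  have hG1 : U * (x ^ 2 - 1) = G := by rw [hG, hUs]; ring
  have hG2 : V * (y ^ 2 - 1) = -G := by
    have h5 : V ^ s = 1 - U ^ s := by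
      rw [hV1U, hfrobs 1 U, one_pow]
    have h6 : V * (y ^ 2 - 1) = V ^ s - V := by rw [hVs]; ring
    rw [h6, h5, hV1U, hG]; ring
  have hUq : U ^ q = U := by
    have h := FiniteField.pow_card U
    rwa [hcard] at h
  have hG0 : G ≠ 0 := by
    intro h
    have hUsU : U ^ s = U := by rw [hG] at h; linear_combination h
    have hU3 : U ^ 3 = U := by
      have h7 : U ^ (s * s) = U := by rw [pow_mul, hUsU, hUsU]
      rw [hss, mul_comm 3 q, pow_mul, hUq] at h7
      exact h7
    have h8 : U * (U - 1) * (U + 1) = 0 := by linear_combination hU3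
    rcases mul_eq_zero.mp h8 with h9 | h9
    · rcases mul_eq_zero.mp h9 with h10 | h10
      · exact hU0 h10
      · have hU1 : U = 1 := by linear_combination h10
        have hVz : V = 0 := by rw [hV1U, hU1]; ring
        exact hV0 hVz
    · have hU1 : U = -1 := by linear_combination h9
      rw [hU1, hm1e] at hUe
      exact h2ne (by linear_combination -hUe)
  have hδmb : δ - b = α := by rw [hδ]; linear_combination h3 - α * char3
  have hδpb : δ + b = -γ := by rw [hδ]; linear_combination -h3 + γ * char3
  have hεpb : ε + b = -α' := by rw [hε]; linear_combination -h4 + α' * char3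
  have hεmb : ε - b = γ' := by rw [hε]; linear_combination h4 - γ' * char3
  set P := (δ ^ 2 - b ^ 2) * (ε ^ 2 - b ^ 2) with hP
  have hPfact : P = α * γ * (α' * γ') := by
    rw [hP]
    have d1 : δ ^ 2 - b ^ 2 = (δ - b) * (δ + b) := by ring
    have d2 : ε ^ 2 - b ^ 2 = (ε - b) * (ε + b) := by ring
    rw [d1, d2, hδmb, hδpb, hεmb, hεpb]; ring
  have hP1 : P ^ e = 1 := by
    rw [hPfact, mul_pow, mul_pow, mul_pow, hαe, hγe, hα'e, hγ'e]; ring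
  have hδ2 : δ ^ 2 - b ^ 2 = b ^ 2 * (x ^ 2 - 1) := by
    have h : x ^ 2 = δ ^ 2 * (b ^ 2)⁻¹ := by rw [hx, mul_pow, inv_pow]
    rw [h]
    field_simp
  have hε2 : ε ^ 2 - b ^ 2 = b ^ 2 * (y ^ 2 - 1) := by
    have h : y ^ 2 = ε ^ 2 * (b ^ 2)⁻¹ := by rw [hy, mul_pow, inv_pow]
    rw [h]
    field_simp
  have hUVP : U * V * P = -(b ^ 2 * b ^ 2) * (G * G) := by
    rw [hP, hδ2, hε2]
    calc U * V * (b ^ 2 * (x ^ 2 - 1) * (b ^ 2 * (y ^ 2 - 1)))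
        = (b ^ 2 * b ^ 2) * ((U * (x ^ 2 - 1)) * (V * (y ^ 2 - 1))) := by ring
      _ = (b ^ 2 * b ^ 2) * (G * (-G)) := by rw [hG1, hG2]
      _ = -(b ^ 2 * b ^ 2) * (G * G) := by ring
  have hb2e : (b ^ 2) ^ e = 1 := by
    rw [← pow_mul, mul_comm 2 e, pow_mul]; exact hsqe2 b hb0
  have hGe2 : G ^ e * G ^ e = 1 := by
    rcases hdi G hG0 with h | h <;> rw [h] <;> ring
  have hA : (U * V * P) ^ e = U ^ e * V ^ e * P ^ e := by
    rw [mul_pow (U * V) P e, mul_pow U V e]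
  have hB : (-(b ^ 2 * b ^ 2) * (G * G)) ^ e
      = (-(b ^ 2 * b ^ 2)) ^ e * (G ^ e * G ^ e) := by
    rw [mul_pow (-(b ^ 2 * b ^ 2)) (G * G) e, mul_pow G G e]
  have hP2 : P ^ e = -1 := by
    calc P ^ e = U ^ e * V ^ e * P ^ e := by rw [hUe, hVe]; ring
      _ = (U * V * P) ^ e := hA.symm
      _ = (-(b ^ 2 * b ^ 2) * (G * G)) ^ e := by rw [hUVP]
      _ = (-(b ^ 2 * b ^ 2)) ^ e * (G ^ e * G ^ e) := hB
      _ = -((b ^ 2) ^ e * (b ^ 2) ^ e) * 1 := by rw [heodd.neg_pow, mul_pow, hGe2]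
      _ = -1 := by rw [hb2e]; ring
  have h2z : (2 : F) = 0 := by linear_combination hP2 - hP1
  exact h2ne h2z

theorem stmt_14 (n : ℕ) (hn : 0 < n) (hcond : n % 4 = 1)
    (d : ℕ) (hd : d = (3 ^ ((n + 1) / 2) - 1) / 2) (b : GaloisField 3 n) :
    ¬ ∃ x₃ x₄ : GaloisField 3 n,
        (x₃ + 1) ^ d + x₃ ^ d = b ∧ (x₄ + 1) ^ d + x₄ ^ d = b ∧
        (x₃ + 1 ≠ 0 ∧ IsSquare (x₃ + 1)) ∧ ¬ IsSquare x₃ ∧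
        ¬ IsSquare (x₄ + 1) ∧ (x₄ ≠ 0 ∧ IsSquare x₄) := by
  rintro ⟨x₃, x₄, h3, h4, ⟨ha0, hasq⟩, hcns, ha'ns, hc'0, hc'sq⟩
  obtain ⟨k, hk⟩ : ∃ k, n = 4 * k + 1 := ⟨n / 4, by omega⟩
  obtain ⟨s, hsdef⟩ : ∃ t, t = 3 ^ ((n + 1) / 2) := ⟨_, rfl⟩
  obtain ⟨q, hqdef⟩ : ∃ t, t = 3 ^ n := ⟨_, rfl⟩
  rw [← hsdef] at hd
  have hsmod : s % 4 = 3 := by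
    rw [hsdef, show (n + 1) / 2 = 2 * k + 1 by omega]
    exact pow3_mod4 k
  have hqmod : q % 4 = 3 := by
    rw [hqdef, show n = 2 * (2 * k) + 1 by omega]
    exact pow3_mod4 (2 * k)
  obtain ⟨e, hedef⟩ : ∃ t, t = q / 2 := ⟨_, rfl⟩
  have hq2e : q = 2 * e + 1 := by omega
  have heodd : Odd e := by rw [Nat.odd_iff]; omega
  have hs2d : s = 2 * d + 1 := by omega
  have hdodd : Odd d := by rw [Nat.odd_iff]; omega
  have hss : s * s = 3 * q := by
    rw [hsdef, hqdef, ← pow_add, show (n + 1) / 2 + (n + 1) / 2 = n + 1 by omega,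
      pow_succ]
    ring
  have hkey : d * (s + 1) = 3 * e + 1 := by
    have h' : (2 * d + 1) * (2 * d + 1) = 3 * (2 * e + 1) := by
      rw [← hs2d, ← hq2e]; exact hss
    have h2 : 2 * (d * ((2 * d + 1) + 1)) = 2 * (3 * e + 1) := by
      zify at h' ⊢
      linear_combination h'
    rw [hs2d]
    exact Nat.eq_of_mul_eq_mul_left (by norm_num) h2
  haveI : Fintype (GaloisField 3 n) := Fintype.ofFinite _
  have hcard : Fintype.card (GaloisField 3 n) = q := by
    rw [← Nat.card_eq_fintype_card, hqdef]; exact GaloisField.card 3 n hn.ne'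
  have char3 : (3 : GaloisField 3 n) = 0 := by
    have h := CharP.cast_eq_zero (GaloisField 3 n) 3
    exact_mod_cast h
  have hchar2 : ringChar (GaloisField 3 n) ≠ 2 := by
    rw [ringChar.eq (GaloisField 3 n) 3]; norm_num
  have hfrob : ∀ u v : GaloisField 3 n, (u + v) ^ s = u ^ s + v ^ s := by
    intro u v; rw [hsdef]; exact add_pow_char_pow u v 3 _
  have hfrobs : ∀ u v : GaloisField 3 n, (u - v) ^ s = u ^ s - v ^ s := by
    intro u v; rw [hsdef]; exact sub_pow_char_pow u v _
  have hneg1 : ¬ IsSquare (-1 : GaloisField 3 n) := by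
    rw [FiniteField.isSquare_neg_one_iff, hcard]
    omega
  exact aux_main char3 hchar2 q s d e hcard hq2e heodd hdodd hs2d hss hkey
    hfrob hfrobs hneg1 b x₃ x₄ h3 h4 ha0 hasq hcns ha'ns hc'0 hc'sq
end

section
/- Let n be a positive integer with n ≡ 1 (mod 4) and let d = (3^((n+1)/2) - 1)/2. Then in GF(3^n), the equation (x+1)^d + x^d = 1 has exactly one solution (namely x = 0), and the equation (x+1)^d + x^d = -1 has exactly one solution (namely x = -1). -/
section Aux

lemma aux_iter {K : Type*} [CommMonoid K] (x : K) (a : ℕ) (hx : x ^ 3 ^ a = x) :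
    ∀ k : ℕ, x ^ 3 ^ (a * k) = x := by
  intro k
  induction k with
  | zero => simp
  | succ k ih =>
    have : x ^ 3 ^ (a * (k + 1)) = (x ^ 3 ^ (a * k)) ^ 3 ^ a := by
      rw [← pow_mul, ← pow_add, Nat.mul_add, Nat.mul_one]
    rw [this, ih, hx]

lemma aux_gcd {K : Type*} [CommMonoid K] :
    ∀ a b : ℕ, ∀ x : K, x ^ 3 ^ a = x → x ^ 3 ^ b = x → x ^ 3 ^ (Nat.gcd a b) = x := by
  intro a b
  induction a, b using Nat.gcd.induction with
  | H0 b => intro x _ h2; simpa using h2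
  | H1 a b ha ih =>
    intro x h1 h2
    rw [Nat.gcd_rec]
    refine ih x ?_ h1
    have hmul : x ^ 3 ^ (a * (b / a)) = x := aux_iter x a h1 (b / a)
    calc x ^ 3 ^ (b % a) = (x ^ 3 ^ (a * (b / a))) ^ 3 ^ (b % a) := by rw [hmul]
      _ = x ^ (3 ^ (a * (b / a)) * 3 ^ (b % a)) := by rw [← pow_mul]
      _ = x ^ 3 ^ b := by rw [← pow_add, Nat.div_add_mod]
      _ = x := h2

lemma aux_cube (n a : ℕ) (hn : n ≠ 0) (ha : Nat.gcd a n = 1)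
    (x : GaloisField 3 n) (h : x ^ 3 ^ a = x) : x ^ 3 = x := by
  have hc : x ^ 3 ^ n = x := by
    haveI : Fintype (GaloisField 3 n) := Fintype.ofFinite _
    have hcard : Fintype.card (GaloisField 3 n) = 3 ^ n := by
      rw [← Nat.card_eq_fintype_card, GaloisField.card 3 n hn]
    rw [← hcard]
    exact FiniteField.pow_card x
  have := aux_gcd a n x h hc
  rwa [ha, pow_one] at this

lemma aux_eq_one (n a : ℕ) (hn : n ≠ 0) (ha : Nat.gcd a n = 1)
    (x : GaloisField 3 n) (hx0 : x ≠ 0) (hx1 : x ≠ -1)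
    (h : x ^ 3 ^ a = x) : x = 1 := by
  have hx3 := aux_cube n a hn ha x h
  have hfac : (x - 1) * (x * (x + 1)) = 0 := by linear_combination hx3
  rcases mul_eq_zero.mp hfac with h1 | h2
  · exact sub_eq_zero.mp h1
  · rcases mul_eq_zero.mp h2 with h3 | h4
    · exact absurd h3 hx0
    · exact absurd (by linear_combination h4) hx1

lemma aux_eq_one' (n m : ℕ) (hn : n ≠ 0) (hm : 1 ≤ m)
    (hg1 : Nat.gcd m n = 1) (hg2 : Nat.gcd (m - 1) n = 1)
    (x : GaloisField 3 n) (hx0 : x ≠ 0) (hx1 : x ≠ -1)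
    (h : x ^ 3 ^ m = x ^ 3) : x = 1 := by
  have hsplit : x ^ 3 ^ m = (x ^ 3 ^ (m - 1)) ^ 3 := by
    rw [← pow_mul, ← pow_succ, Nat.sub_add_cancel hm]
  have hinj : x ^ 3 ^ (m - 1) = x := by
    apply frobenius_inj (GaloisField 3 n) 3
    simp only [frobenius_def]
    rw [← hsplit, h]
  exact aux_eq_one n (m - 1) hn hg2 x hx0 hx1 hinj

end Aux

theorem stmt_15 (n : ℕ) (hn : 0 < n) (hcond : n % 4 = 1)
    (d : ℕ) (hd : d = (3 ^ ((n + 1) / 2) - 1) / 2) :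
    {x : GaloisField 3 n | (x + 1) ^ d + x ^ d = 1} = {0} ∧
    {x : GaloisField 3 n | (x + 1) ^ d + x ^ d = -1} = {-1} := by
  obtain ⟨k, hk⟩ : ∃ k, n = 4 * k + 1 := ⟨n / 4, by omega⟩
  set m : ℕ := (n + 1) / 2 with hm
  have hm1 : m = 2 * k + 1 := by omega
  have hple : 1 ≤ 3 ^ m := Nat.one_le_pow _ _ (by norm_num)
  have h4 : 3 ^ m % 4 = 3 := by
    have h9 : 3 ^ (2 * k) % 4 = 1 := by
      rw [pow_mul, Nat.pow_mod]
      norm_num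
    have : 3 ^ m = 3 ^ (2 * k) * 3 := by rw [hm1, pow_succ]
    omega
  have hmd : d * 2 + 1 = 3 ^ m := by omega
  have hdodd : Odd d := Nat.odd_iff.mpr (by omega)
  have hd0 : d ≠ 0 := by omega
  have hg1 : Nat.gcd m n = 1 := by
    have h1 : Nat.gcd m n ∣ 2 * m := (Nat.gcd_dvd_left m n).mul_left 2
    have h2 := Nat.gcd_dvd_right m n
    have := Nat.dvd_sub h1 h2
    rw [show 2 * m - n = 1 by omega] at this
    exact Nat.eq_one_of_dvd_one this
  have hg2 : Nat.gcd (m - 1) n = 1 := by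
    have h1 : Nat.gcd (m - 1) n ∣ 2 * (m - 1) := (Nat.gcd_dvd_left _ n).mul_left 2
    have h2 := Nat.gcd_dvd_right (m - 1) n
    have := Nat.dvd_sub h2 h1
    rw [show n - 2 * (m - 1) = 1 by omega] at this
    exact Nat.eq_one_of_dvd_one this
  have hn0 : n ≠ 0 := by omega
  have h3K : (3 : GaloisField 3 n) = 0 := by
    have := CharP.cast_eq_zero (GaloisField 3 n) 3
    exact_mod_cast this
  have hmle : 1 ≤ m := by omega
  -- generic power computations
  have hy2 : ∀ x : GaloisField 3 n, (x ^ d) ^ 2 * x = x ^ 3 ^ m := by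
    intro x
    calc (x ^ d) ^ 2 * x = x ^ (d * 2) * x ^ 1 := by rw [← pow_mul, pow_one]
      _ = x ^ (d * 2 + 1) := by rw [← pow_add]
      _ = x ^ 3 ^ m := by rw [hmd]
  have hfrob : ∀ x : GaloisField 3 n, (x + 1) ^ 3 ^ m = x ^ 3 ^ m + 1 := by
    intro x
    rw [add_pow_char_pow, one_pow]
  -- case x = 1 contradiction for the -1 equation
  have hone : ¬ (((1 : GaloisField 3 n) + 1) ^ d + 1 ^ d = -1) := by
    have h2 : (1 : GaloisField 3 n) + 1 = -1 := by linear_combination h3K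
    rw [h2, hdodd.neg_one_pow, one_pow]
    intro hE
    exact (one_ne_zero : (1 : GaloisField 3 n) ≠ 0) (by linear_combination hE)
  have hne : (1 : GaloisField 3 n) ≠ -1 := by
    intro h
    exact (one_ne_zero : (1 : GaloisField 3 n) ≠ 0) (by linear_combination h3K - h)
  constructor
  · ext x
    simp only [Set.mem_setOf_eq, Set.mem_singleton_iff]
    constructor
    · intro hE
      by_contra hx0
      by_cases hx1 : x = -1
      · subst hx1
        rw [neg_add_cancel, zero_pow hd0, hdodd.neg_one_pow, zero_add] at hE
        exact (one_ne_zero : (1 : GaloisField 3 n) ≠ 0) (by linear_combination h3K + hE)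
      · -- main case, s = 1
        have hz : (x + 1) ^ d = 1 - x ^ d := by linear_combination hE
        have hz2 : (1 - x ^ d) ^ 2 * (x + 1) = x ^ 3 ^ m + 1 := by
          rw [← hz, ← hfrob x]
          calc ((x + 1) ^ d) ^ 2 * (x + 1) = (x + 1) ^ (d * 2) * (x + 1) ^ 1 := by
                rw [← pow_mul, pow_one]
            _ = (x + 1) ^ (d * 2 + 1) := by rw [← pow_add]
            _ = (x + 1) ^ 3 ^ m := by rw [hmd]
        have hy2x := hy2 x
        have hfac : (x + x ^ d) * (1 + x ^ d) = 0 := by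
          linear_combination hz2 - hy2x + (x * x ^ d + x ^ d) * h3K
        rcases mul_eq_zero.mp hfac with hc | hc
        · -- x^d = -x
          have hyv : x ^ d = -x := by linear_combination hc
          have hxm : x ^ 3 ^ m = x ^ 3 := by rw [← hy2x, hyv]; ring
          have hx1' := aux_eq_one' n m hn0 hmle hg1 hg2 x hx0 hx1 hxm
          rw [hx1', one_pow] at hyv
          exact hne (by linear_combination hyv)
        · -- x^d = -1
          have hyv : x ^ d = -1 := by linear_combination hc
          have hxm : x ^ 3 ^ m = x := by rw [← hy2x, hyv]; ring
          have hx1' := aux_eq_one n m hn0 hg1 x hx0 hx1 hxm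
          rw [hx1', one_pow] at hyv
          exact hne hyv
    · intro h
      subst h
      rw [zero_add, one_pow, zero_pow hd0, add_zero]
  · ext x
    simp only [Set.mem_setOf_eq, Set.mem_singleton_iff]
    constructor
    · intro hE
      by_contra hx1
      by_cases hx0 : x = 0
      · subst hx0
        rw [zero_add, one_pow, zero_pow hd0, add_zero] at hE
        exact hne hE
      · -- main case, s = -1
        have hz : (x + 1) ^ d = -1 - x ^ d := by linear_combination hE
        have hz2 : (-1 - x ^ d) ^ 2 * (x + 1) = x ^ 3 ^ m + 1 := by
          rw [← hz, ← hfrob x]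
          calc ((x + 1) ^ d) ^ 2 * (x + 1) = (x + 1) ^ (d * 2) * (x + 1) ^ 1 := by
                rw [← pow_mul, pow_one]
            _ = (x + 1) ^ (d * 2 + 1) := by rw [← pow_add]
            _ = (x + 1) ^ 3 ^ m := by rw [hmd]
        have hy2x := hy2 x
        have hfac : (x - x ^ d) * (1 - x ^ d) = 0 := by
          linear_combination hz2 - hy2x - (x * x ^ d + x ^ d) * h3K
        rcases mul_eq_zero.mp hfac with hc | hc
        · -- x^d = x
          have hyv : x ^ d = x := by linear_combination -hc
          have hxm : x ^ 3 ^ m = x ^ 3 := by rw [← hy2x, hyv]; ring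
          have hx1' := aux_eq_one' n m hn0 hmle hg1 hg2 x hx0 hx1 hxm
          rw [hx1'] at hE
          exact hone hE
        · -- x^d = 1
          have hyv : x ^ d = 1 := by linear_combination -hc
          have hxm : x ^ 3 ^ m = x := by rw [← hy2x, hyv]; ring
          have hx1' := aux_eq_one n m hn0 hg1 x hx0 hx1 hxm
          rw [hx1'] at hE
          exact hone hE
    · intro h
      subst h
      rw [neg_add_cancel, zero_pow hd0, hdodd.neg_one_pow, zero_add]
end

section
/- Let n be a positive integer with n ≡ 1 (mod 4), let d = (3^(n+1) - 1)/8, and let b ∈ GF(3^n). Then there do not simultaneously exist x₁, x₂ ∈ GF(3^n) such that (x₁+1)^d + x₁^d = b, (x₂+1)^d + x₂^d = b, both x₁ and x₁+1 are nonzero squares in GF(3^n), and both x₂ and x₂+1 are nonsquares in GF(3^n). -/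
/-- Core algebraic lemma: in a field of characteristic 3 where `-1` is not a square,
if `(1+u)^4 (V^4-1) = (1+V)^4 (u^4-1)` with `1+u, 1+V ≠ 0`, then `(1+u)(1+V)` is a square. -/
lemma core_lemma {F : Type*} [Field F] (h3 : (3:F) = 0) (hns : ¬ IsSquare (-1:F))
    (u V : F) (hu : 1 + u ≠ 0) (hV : 1 + V ≠ 0)
    (hE : (1+u)^4 * (V^4 - 1) = (1+V)^4 * (u^4 - 1)) :
    IsSquare ((1+u) * (1+V)) := by
  have key : (1+u)*(1+V)*((V - u) * ((u^2-u-1)*V^2 - (1+u+u^2)*V + (1-u-u^2))) = 0 := by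
    linear_combination hE + ((-1)*V + (-2)*V^2 + (-2)*V^3 + (-1)*V^4 + u + (-1)*u*V^3
      + (-2)*u*V^4 + 2*u^2 + (-2)*u^2*V^4 + 2*u^3 + u^3*V + (-1)*u^3*V^4 + u^4
      + 2*u^4*V + 2*u^4*V^2 + u^4*V^3) * h3
  rcases mul_eq_zero.mp key with h | h
  · exact absurd h (mul_ne_zero hu hV)
  rcases mul_eq_zero.mp h with h | hQ
  · have hVu : V = u := sub_eq_zero.mp h
    exact ⟨1+u, by rw [hVu]⟩
  by_cases hc : u^2 - u - 1 = 0
  · have hprod : (1+u)*(1+V) = 1 := by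
      linear_combination hQ + (V - V^2 + 1)*hc + ((1+u)*V + u)*h3
    rw [hprod]; exact IsSquare.one
  · exfalso
    have hsq : ((u^2-u-1)*V + (1+u+u^2))^2 = -(1+u)^4 := by
      linear_combination (u^2-u-1)*hQ + (1 - V + 2*u - 2*u*V + 2*u^2 - u^2*V
        + 2*u^3 + u^4 + u^4*V)*h3
    apply hns
    refine ⟨((u^2-u-1)*V + (1+u+u^2)) / (1+u)^2, ?_⟩
    have h1u2 : ((1+u)^2 : F) ≠ 0 := pow_ne_zero _ hu
    field_simp
    linear_combination -hsq

/-- Glue lemma. -/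
lemma glue_lemma {F : Type*} [Field F] (h3 : (3:F) = 0) (hns : ¬ IsSquare (-1:F))
    (s t S T b : F) (hs : s ≠ 0) (hT : T ≠ 0)
    (hsq_s : IsSquare s) (hsq_t : IsSquare t) (hsq_T : IsSquare T)
    (ht4 : t^4 = s^4 + 1) (hS4 : S^4 = T^4 + 1)
    (hb1 : s + t = b) (hb2 : S + T = -b) : False := by
  obtain ⟨α, hα⟩ := hsq_s
  obtain ⟨β, hβ⟩ := hsq_T
  have hα0 : α ≠ 0 := fun h => hs (by rw [hα, h, mul_zero])
  have hβ0 : β ≠ 0 := fun h => hT (by rw [hβ, h, mul_zero])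
  have hb : b ≠ 0 := by
    intro h0
    obtain ⟨γ, hγ⟩ := hsq_t
    have hts : γ * γ = -(α * α) := by
      rw [← hγ, ← hα]; linear_combination hb1 + h0
    apply hns
    refine ⟨γ / α, ?_⟩
    field_simp
    linear_combination -hts
  have e1 : 1 + t/s = b / s := by field_simp; linear_combination hb1
  have e2 : 1 + S/T = -b / T := by field_simp; linear_combination hb2
  have e3 : (t/s)^4 - 1 = 1 / s^4 := by field_simp; linear_combination ht4
  have e4 : (S/T)^4 - 1 = 1 / T^4 := by field_simp; linear_combination hS4
  have hu1 : 1 + t/s ≠ 0 := by rw [e1]; exact div_ne_zero hb hs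
  have hV1 : 1 + S/T ≠ 0 := by rw [e2]; exact div_ne_zero (neg_ne_zero.mpr hb) hT
  have hE : (1 + t/s)^4 * ((S/T)^4 - 1) = (1 + S/T)^4 * ((t/s)^4 - 1) := by
    rw [e1, e2, e3, e4]
    field_simp
  have hsqp := core_lemma h3 hns (t/s) (S/T) hu1 hV1 hE
  rw [e1, e2, hα, hβ] at hsqp
  obtain ⟨r, hr⟩ := hsqp
  apply hns
  refine ⟨r * α * β / b, ?_⟩
  field_simp at hr ⊢
  linear_combination hr

theorem stmt_16 (n : ℕ) (hn : 0 < n) (hcond : n % 4 = 1)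
    (d : ℕ) (hd : d = (3 ^ (n + 1) - 1) / 8) (b : GaloisField 3 n) :
    ¬ ∃ x₁ x₂ : GaloisField 3 n,
        (x₁ + 1) ^ d + x₁ ^ d = b ∧ (x₂ + 1) ^ d + x₂ ^ d = b ∧
        (x₁ ≠ 0 ∧ IsSquare x₁) ∧ (x₁ + 1 ≠ 0 ∧ IsSquare (x₁ + 1)) ∧
        ¬ IsSquare x₂ ∧ ¬ IsSquare (x₂ + 1) := by
  rintro ⟨x₁, x₂, h1, h2, ⟨hx1, hx1sq⟩, ⟨hx11, hx11sq⟩, hx2ns, hx21ns⟩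
  haveI : Fintype (GaloisField 3 n) := Fintype.ofFinite _
  -- numerical facts
  have hq4 : 3^n % 4 = 3 := by
    conv_lhs => rw [show n = 2*(n/2)+1 by omega]
    rw [pow_add, pow_mul, Nat.mul_mod, Nat.pow_mod]
    norm_num
  have h16 : 3^(n+1) % 16 = 9 := by
    conv_lhs => rw [show n+1 = 4*((n+1)/4)+2 by omega]
    rw [pow_add, pow_mul, Nat.mul_mod, Nat.pow_mod]
    norm_num
  have hQ3 : 3^(n+1) = 3 * 3^n := by rw [pow_succ, mul_comm]
  set e := 3^n / 2 with he_def
  have he_odd : Odd e := by rw [Nat.odd_iff]; omega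
  have h4d : d * 4 = e * 3 + 1 := by omega
  have hd_odd : Odd d := by rw [Nat.odd_iff]; omega
  -- field facts
  have h3 : (3 : GaloisField 3 n) = 0 := by
    exact_mod_cast CharP.cast_eq_zero (GaloisField 3 n) 3
  have hchar : ringChar (GaloisField 3 n) ≠ 2 := by
    rw [ringChar.eq (GaloisField 3 n) 3]; norm_num
  have hcard : Fintype.card (GaloisField 3 n) / 2 = e := by
    rw [← Nat.card_eq_fintype_card, GaloisField.card 3 n hn.ne']
  have euler : ∀ z : GaloisField 3 n, z ≠ 0 → (IsSquare z ↔ z ^ e = 1) := by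
    intro z hz
    rw [← hcard]
    exact FiniteField.isSquare_iff hchar hz
  have hne : (-1 : GaloisField 3 n) ≠ 1 := by
    intro h
    exact one_ne_zero (α := GaloisField 3 n) (by linear_combination h + h3)
  have hneg1 : (-1 : GaloisField 3 n) ^ e = -1 := Odd.neg_one_pow he_odd
  have hns : ¬ IsSquare (-1 : GaloisField 3 n) := by
    intro hsq
    exact hne (by rw [← hneg1]; exact (euler (-1) (by norm_num) |>.mp hsq))
  have hsq_pow : ∀ z : GaloisField 3 n, z ≠ 0 → IsSquare z → z^e = 1 :=
    fun z hz h => (euler z hz).mp h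
  have hns_pow : ∀ z : GaloisField 3 n, ¬ IsSquare z → z^e = -1 := by
    intro z h
    have hz : z ≠ 0 := fun h0 => h (by rw [h0]; exact ⟨0, by ring⟩)
    rcases FiniteField.pow_dichotomy hchar hz with h1 | h1 <;> rw [hcard] at h1
    · exact absurd ((euler z hz).mpr h1) h
    · exact h1
  have pow4 : ∀ z : GaloisField 3 n, (z^d)^4 = (z^e)^3 * z := by
    intro z
    rw [← pow_mul, h4d, pow_succ, pow_mul]
  -- construct s, t
  have hs4 : (x₁^d)^4 = x₁ := by rw [pow4, hsq_pow x₁ hx1 hx1sq]; ring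
  have ht4 : ((x₁+1)^d)^4 = x₁ + 1 := by rw [pow4, hsq_pow (x₁+1) hx11 hx11sq]; ring
  have hsq_s : IsSquare (x₁^d) := by
    obtain ⟨y, hy⟩ := hx1sq
    exact ⟨y^d, by rw [hy]; ring⟩
  have hsq_t : IsSquare ((x₁+1)^d) := by
    obtain ⟨y, hy⟩ := hx11sq
    exact ⟨y^d, by rw [hy]; ring⟩
  -- construct S, T
  have hx2 : x₂ ≠ 0 := fun h => hx2ns (by rw [h]; exact ⟨0, by ring⟩)
  have hx21 : x₂ + 1 ≠ 0 := fun h => hx21ns (by rw [h]; exact ⟨0, by ring⟩)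
  have hS4 : (-(x₂^d))^4 = -x₂ := by
    rw [show (-(x₂^d))^4 = (x₂^d)^4 by ring, pow4, hns_pow x₂ hx2ns]; ring
  have hT4 : (-((x₂+1)^d))^4 = -(x₂+1) := by
    rw [show (-((x₂+1)^d))^4 = ((x₂+1)^d)^4 by ring, pow4, hns_pow (x₂+1) hx21ns]; ring
  have hde : ∀ z : GaloisField 3 n, (z^d)^e = (z^e)^d := by
    intro z; rw [← pow_mul, mul_comm, pow_mul]
  have hsq_T : IsSquare (-((x₂+1)^d)) := by
    have hTne : -((x₂+1)^d) ≠ 0 := neg_ne_zero.mpr (pow_ne_zero d hx21)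
    apply (euler _ hTne).mpr
    rw [show -((x₂+1)^d) = (-1) * (x₂+1)^d by ring, mul_pow, hneg1, hde,
      hns_pow (x₂+1) hx21ns, Odd.neg_one_pow hd_odd]
    ring
  -- apply glue
  refine glue_lemma h3 hns (x₁^d) ((x₁+1)^d) (-(x₂^d)) (-((x₂+1)^d)) b
    (pow_ne_zero d hx1) (neg_ne_zero.mpr (pow_ne_zero d hx21)) hsq_s hsq_t hsq_T
    ?_ ?_ ?_ ?_
  · rw [hs4, ht4]
  · rw [hS4, hT4]; ring
  · linear_combination h1
  · linear_combination -h2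
end

section
/- Let n be an odd positive integer, let d = (3^n + 1)/4 + (3^n - 1)/2, and let b ∈ GF(3^n) be nonzero. If x ∈ GF(3^n) \ {0, -1} satisfies (x+1)^d + x^d = b and both x and x+1 are nonzero squares in GF(3^n), then x = (b⁻¹ - b)². If instead both x and x+1 are nonsquares in GF(3^n), then x = -(b + b⁻¹)². -/
theorem stmt_17 (n : ℕ) (hn : 0 < n) (hodd : Odd n)
    (d : ℕ) (hd : d = (3 ^ n + 1) / 4 + (3 ^ n - 1) / 2)
    (b : GaloisField 3 n) (hb : b ≠ 0)
    (x : GaloisField 3 n) (hx0 : x ≠ 0) (hx1 : x ≠ -1)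
    (hsol : (x + 1) ^ d + x ^ d = b) :
    ((IsSquare x ∧ x + 1 ≠ 0 ∧ IsSquare (x + 1)) → x = (b⁻¹ - b) ^ 2) ∧
    ((¬ IsSquare x ∧ ¬ IsSquare (x + 1)) → x = -(b + b⁻¹) ^ 2) := by
  haveI : Fintype (GaloisField 3 n) := Fintype.ofFinite _
  obtain ⟨k, hk⟩ := hodd
  have hq3 : (3:ℕ)^n = 9^k*3 := by subst hk; rw [pow_succ, pow_mul]; norm_num
  have hq4 : (3:ℕ)^n % 4 = 3 := by
    rw [hq3, Nat.mul_mod, Nat.pow_mod]; norm_num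
  have hcard : Fintype.card (GaloisField 3 n) = 3 ^ n := by
    rw [← Nat.card_eq_fintype_card]; exact GaloisField.card 3 n hn.ne'
  have hchar : ringChar (GaloisField 3 n) ≠ 2 := by
    rw [ringChar.eq (GaloisField 3 n) 3]; norm_num
  have h3 : (3 : GaloisField 3 n) = 0 := by
    have := CharP.cast_eq_zero (GaloisField 3 n) 3; exact_mod_cast this
  set q := (3:ℕ)^n with hqdef
  have hq2 : Fintype.card (GaloisField 3 n) / 2 = (q-1)/2 := by rw [hcard]; omega
  have key : ∀ y : GaloisField 3 n, y ≠ 0 →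
      (y^((q+1)/4))^2 = y^((q-1)/2) * y ∧ y^d = y^((q+1)/4) * y^((q-1)/2) := by
    intro y hy
    constructor
    · rw [← pow_mul]
      have h : (q+1)/4 * 2 = (q-1)/2 + 1 := by omega
      rw [h, pow_succ]
    · rw [hd, pow_add]
  have hchi : ∀ y : GaloisField 3 n, y ≠ 0 → (IsSquare y ↔ y^((q-1)/2) = 1) := by
    intro y hy
    rw [← hq2]
    exact FiniteField.isSquare_iff hchar hy
  have hdich : ∀ y : GaloisField 3 n, y ≠ 0 → y^((q-1)/2) = 1 ∨ y^((q-1)/2) = -1 := by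
    intro y hy; rw [← hq2]; exact FiniteField.pow_dichotomy hchar hy
  have hx1' : x + 1 ≠ 0 := by
    intro h; exact hx1 (by linear_combination h)
  obtain ⟨hu2, hud⟩ := key x hx0
  obtain ⟨hv2, hvd⟩ := key (x+1) hx1'
  set u := x^((q+1)/4) with hu
  set v := (x+1)^((q+1)/4) with hv
  constructor
  · rintro ⟨hsx, -, hsx1⟩
    rw [(hchi x hx0).1 hsx] at hu2 hud
    rw [(hchi _ hx1').1 hsx1] at hv2 hvd
    -- u^2 = x, v^2 = x+1, b = v + u
    have hbe : v + u = b := by rw [← hsol, hud, hvd]; ring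
    have hvu : b * (v - u) = 1 := by
      rw [← hbe]; linear_combination hv2 - hu2
    have hbinv : b⁻¹ = v - u := inv_eq_of_mul_eq_one_right hvu
    have huval : b⁻¹ - b = u := by
      rw [hbinv, ← hbe]; linear_combination (-u) * h3
    rw [huval]
    linear_combination -hu2
  · rintro ⟨hsx, hsx1⟩
    have hchix : x^((q-1)/2) = -1 := by
      rcases hdich x hx0 with h | h
      · exact absurd ((hchi x hx0).2 h) hsx
      · exact h
    have hchix1 : (x+1)^((q-1)/2) = -1 := by
      rcases hdich (x+1) hx1' with h | h
      · exact absurd ((hchi _ hx1').2 h) hsx1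
      · exact h
    rw [hchix] at hu2 hud
    rw [hchix1] at hv2 hvd
    -- u^2 = -x, v^2 = -(x+1), b = -v - u
    have hbe : -v - u = b := by rw [← hsol, hud, hvd]; ring
    have hvu : b * (v - u) = 1 := by
      rw [← hbe]; linear_combination hu2 - hv2
    have hbinv : b⁻¹ = v - u := inv_eq_of_mul_eq_one_right hvu
    have huval : b + b⁻¹ = u := by
      rw [hbinv, ← hbe]; linear_combination (-u) * h3
    rw [huval]
    linear_combination hu2
end

section
/- Let n be an odd positive integer and let d = (3^n + 1)/4 + (3^n - 1)/2. Then in GF(3^n), the equation (x+1)^d + x^d = 1 has exactly two solutions (namely x = 0 and x = -1), and the equation (x+1)^d + x^d = -1 has exactly one solution (namely x = 1). -/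
theorem stmt_19 (n : ℕ) (hn : 0 < n) (hodd : Odd n)
    (d : ℕ) (hd : d = (3 ^ n + 1) / 4 + (3 ^ n - 1) / 2) :
    {x : GaloisField 3 n | (x + 1) ^ d + x ^ d = 1} = {0, -1} ∧
    {x : GaloisField 3 n | (x + 1) ^ d + x ^ d = -1} = {1} := by
  haveI instF : Fintype (GaloisField 3 n) := Fintype.ofFinite _
  set F := GaloisField 3 n with hF
  set q := 3 ^ n with hq
  have hcard : Fintype.card F = q := by
    rw [← Nat.card_eq_fintype_card]; exact GaloisField.card 3 n hn.ne'
  -- q ≡ 3 (mod 8)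
  have hq8 : q % 8 = 3 := by
    obtain ⟨k, rfl⟩ := hodd
    have h9 : 9 ^ k % 8 = 1 := by
      rw [Nat.pow_mod]; norm_num
    have h1 : (3 : ℕ) ^ (2 * k + 1) = 3 * 9 ^ k := by
      rw [pow_succ, pow_mul]; ring
    rw [hq, h1, Nat.mul_mod, h9]
  obtain ⟨m, hm⟩ : ∃ m, q = 8 * m + 3 := ⟨q / 8, by omega⟩
  have hdm : d = 6 * m + 2 := by omega
  have hdne : d ≠ 0 := by omega
  have hdeven : Even d := ⟨3 * m + 1, by omega⟩
  have h2d : 2 * d = (q - 1) + ((q - 1) / 2 + 1) := by omega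
  have hhalf : (q - 1) / 2 * 2 = q - 1 := by omega
  -- characteristic facts
  have h3 : (3 : F) = 0 := by
    have := CharP.cast_eq_zero F 3
    simpa using this
  have hm1 : (-1 : F) ≠ 1 := by
    intro h
    have : (1 : F) = 0 := by linear_combination h + h3
    exact one_ne_zero this
  have h2ne : (2 : F) ≠ 0 := by
    intro h
    have : (1 : F) = 0 := by linear_combination h3 - h
    exact one_ne_zero this
  have h11 : (1 + 1 : F) = -1 := by linear_combination h3
  -- quadratic character is ±1
  have hχ : ∀ y : F, y ≠ 0 → y ^ ((q - 1) / 2) = 1 ∨ y ^ ((q - 1) / 2) = -1 := by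
    intro y hy
    have h1 : (y ^ ((q - 1) / 2)) ^ 2 = 1 := by
      rw [← pow_mul, hhalf, ← hcard]
      exact FiniteField.pow_card_sub_one_eq_one y hy
    have h2' : (y ^ ((q - 1) / 2) - 1) * (y ^ ((q - 1) / 2) + 1) = 0 := by
      linear_combination h1
    rcases mul_eq_zero.mp h2' with h | h
    · left; linear_combination h
    · right; linear_combination h
  -- (y^d)^2 = χ(y) * y
  have hpow : ∀ y : F, y ≠ 0 → (y ^ d) ^ 2 = y ^ ((q - 1) / 2) * y := by
    intro y hy
    have h1 : y ^ (q - 1) = 1 := by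
      rw [← hcard]; exact FiniteField.pow_card_sub_one_eq_one y hy
    rw [← pow_mul, Nat.mul_comm d 2, h2d, pow_add, h1, one_mul, pow_add, pow_one]
  -- main key lemma
  have key : ∀ c : F, c = 1 ∨ c = -1 → ∀ x : F, x ≠ 0 → x + 1 ≠ 0 →
      (x + 1) ^ d + x ^ d = c → x = 1 ∧ c = -1 := by
    intro c hc x hx0 hx1 hsol
    have hc2 : c ^ 2 = 1 := by rcases hc with h | h <;> rw [h] <;> ring
    have hc0 : c ≠ 0 := by
      rcases hc with h | h <;> rw [h]
      · exact one_ne_zero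
      · exact neg_ne_zero.mpr one_ne_zero
    set u := x ^ d with hu
    have hune : u ≠ 0 := by
      rw [hu]
      exact pow_ne_zero _ hx0
    have hu2 := hpow x hx0
    have hv2 := hpow (x + 1) hx1
    have hveq : (x + 1) ^ d = c - u := by linear_combination hsol
    have master : (x + 1) ^ ((q - 1) / 2) * (x + 1) = 1 - 2 * c * u + x ^ ((q - 1) / 2) * x := by
      calc (x + 1) ^ ((q - 1) / 2) * (x + 1) = ((x + 1) ^ d) ^ 2 := hv2.symm
        _ = (c - u) ^ 2 := by rw [hveq]
        _ = 1 - 2 * c * u + x ^ ((q - 1) / 2) * x := by linear_combination hc2 + hu2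
    rcases hχ x hx0 with hs | hs <;> rcases hχ (x + 1) hx1 with ht | ht <;>
        rw [hs] at hu2 <;> rw [hs, ht] at master
    -- case s = 1, t = 1
    · exfalso
      have h' : (2 : F) * (c * u) = 0 := by linear_combination master
      rcases mul_eq_zero.mp h' with h | h
      · exact h2ne h
      rcases mul_eq_zero.mp h with h | h
      · exact hc0 h
      · exact hune h
    -- case s = 1, t = -1
    · have h0 : (u + c) ^ 2 = 0 := by
        linear_combination hu2 + master + hc2 + (x + 1) * h3
      have huc : u + c = 0 := sq_eq_zero_iff.mp h0
      have huv : u = -c := by linear_combination huc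
      have hx' : x = 1 := by
        linear_combination -hu2 + hc2 + (u - c) * huv
      refine ⟨hx', ?_⟩
      have hu1 : u = 1 := by rw [hu, hx', one_pow]
      have hv1 : (x + 1 : F) ^ d = 1 := by
        rw [hx', h11, hdeven.neg_one_pow]
      rw [hv1, hu1] at hsol
      linear_combination h3 - hsol
    -- case s = -1, t = 1
    · exfalso
      have hfac : u * (u - c) = 0 := by
        linear_combination hu2 + master - (x + c * u) * h3
      rcases mul_eq_zero.mp hfac with h | h
      · exact hune h
      · have huv : u = c := by linear_combination h
        have : x + 1 = 0 := by
          linear_combination hu2 - (u + c) * huv - hc2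
        exact hx1 this
    -- case s = -1, t = -1
    · exfalso
      have hcu : c * u = 1 := by
        linear_combination 2 * master - (c * u - 1) * h3
      have huv : u = c := by linear_combination c * hcu - u * hc2
      have : x + 1 = 0 := by
        linear_combination hu2 - (u + c) * huv - hc2
      exact hx1 this
  constructor
  · ext x
    simp only [Set.mem_setOf_eq, Set.mem_insert_iff, Set.mem_singleton_iff]
    constructor
    · intro hsol
      by_contra hcon
      push_neg at hcon
      obtain ⟨hx0, hx1⟩ := hcon
      have hx1' : x + 1 ≠ 0 := fun h => hx1 (by linear_combination h)
      obtain ⟨-, hcc⟩ := key 1 (Or.inl rfl) x hx0 hx1' hsol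
      exact hm1 hcc.symm
    · rintro (rfl | rfl)
      · simp [zero_pow hdne]
      · rw [neg_add_cancel, zero_pow hdne, zero_add, hdeven.neg_one_pow]
  · ext x
    simp only [Set.mem_setOf_eq, Set.mem_singleton_iff]
    constructor
    · intro hsol
      by_cases hx0 : x = 0
      · exfalso
        rw [hx0, zero_add, one_pow, zero_pow hdne, add_zero] at hsol
        exact hm1 hsol.symm
      by_cases hx1 : x + 1 = 0
      · exfalso
        have hxv : x = -1 := by linear_combination hx1
        rw [hxv, neg_add_cancel, zero_pow hdne, zero_add, hdeven.neg_one_pow] at hsol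
        exact hm1 hsol.symm
      exact (key (-1) (Or.inr rfl) x hx0 hx1 hsol).1
    · rintro rfl
      show (1 + 1 : F) ^ d + 1 ^ d = -1
      rw [h11, hdeven.neg_one_pow, one_pow, h11]
end
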